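/- arXiv:2106.06808 — 8 statements merged into one kernel-verified Lean document; each statement's English description precedes it below -/
import Mathlib

section
/- Let κ ∈ (0,1) and let U be an odd zero-up ground state for parameter κ, and set N := U(π/2). Then ∫₀^{π/2} (2 − N²(1 + sin²θ))^{−1/2} dθ = π / (2√2 κ). -/
open Real MeasureTheory Set

noncomputable section

/-- An odd zero-up ground state for parameter `κ`: a `2π`-periodic, odd, twice
continuously differentiable function `U : ℝ → ℝ` satisfying
`κ² U'' + U − U³ = 0` on `ℝ`, with `U' > 0` on `[0, π/2)` and `U' < 0` on `(π/2, π]`. -/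
def IsOddZeroUpGroundState (κ : ℝ) (U : ℝ → ℝ) : Prop :=
  ContDiff ℝ 2 U ∧
  Function.Periodic U (2 * π) ∧
  (∀ x : ℝ, U (-x) = - U x) ∧
  (∀ x : ℝ, κ ^ 2 * deriv (deriv U) x + U x - U x ^ 3 = 0) ∧
  (∀ x ∈ Set.Ico (0 : ℝ) (π / 2), 0 < deriv U x) ∧
  (∀ x ∈ Set.Ioc (π / 2) π, deriv U x < 0)

/-- The Allen–Cahn energy with diffusion coefficient `κ`. -/
def energy (κ : ℝ) (u : ℝ → ℝ) : ℝ :=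
  ∫ x in (-π)..π, (κ ^ 2 / 2 * (deriv u x) ^ 2 + (1 - u x ^ 2) ^ 2 / 4)

/-- The `L²` norm over one period `(-π, π)`. -/
def L2norm (f : ℝ → ℝ) : ℝ := Real.sqrt (∫ x in (-π)..π, (f x) ^ 2)

/-- The `H¹` norm over one period `(-π, π)`. -/
def H1norm (f : ℝ → ℝ) : ℝ := Real.sqrt (L2norm f ^ 2 + L2norm (deriv f) ^ 2)

set_option maxHeartbeats 2000000 in
/-- `∫₀^{π/2} (2 − N²(1+sin²θ))^{−1/2} dθ = π/(2√2 κ)` with `N = U(π/2)`. -/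
theorem ground_state_integral_identity (κ : ℝ) (hκ : 0 < κ) (hκ1 : κ < 1)
    (U : ℝ → ℝ) (hU : IsOddZeroUpGroundState κ U) :
    ∫ θ in (0 : ℝ)..(π / 2),
        1 / Real.sqrt (2 - (U (π / 2)) ^ 2 * (1 + Real.sin θ ^ 2))
      = π / (2 * Real.sqrt 2 * κ) := by
  obtain ⟨hC2, hper, hodd, hode, hpos, hneg⟩ := hU
  set N := U (π / 2) with hNdef
  have hπ : (0:ℝ) < π / 2 := by positivity
  have hπ2 : π / 2 < π := by linarith [pi_pos]
  -- differentiability facts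
  have hdU : Differentiable ℝ U := hC2.differentiable (by norm_num)
  have h2 : ContDiff ℝ (1 + 1) U := by norm_num at hC2 ⊢; exact hC2
  have hC1' := (contDiff_succ_iff_deriv.mp h2).2.2
  have hdU' : Differentiable ℝ (deriv U) := hC1'.differentiable (by norm_num)
  have hcU : Continuous U := hdU.continuous
  -- U 0 = 0
  have hU0 : U 0 = 0 := by have := hodd 0; simp at this; linarith
  -- strict monotonicity
  have hmono : StrictMonoOn U (Icc 0 (π / 2)) := by
    apply strictMonoOn_of_deriv_pos (convex_Icc _ _) hcU.continuousOn
    intro x hx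
    rw [interior_Icc] at hx
    exact hpos x ⟨hx.1.le, hx.2⟩
  have hanti : StrictAntiOn U (Icc (π / 2) π) := by
    apply strictAntiOn_of_deriv_neg (convex_Icc _ _) hcU.continuousOn
    intro x hx
    rw [interior_Icc] at hx
    exact hneg x ⟨hx.1, hx.2.le⟩
  -- local max at π/2, so derivative vanishes there
  have hlmax : IsLocalMax U (π / 2) := by
    filter_upwards [Ioo_mem_nhds hπ hπ2] with x hx
    rcases le_total x (π / 2) with h | h
    · exact hmono.monotoneOn ⟨hx.1.le, h⟩ ⟨hπ.le, le_rfl⟩ h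
    · exact hanti.antitoneOn ⟨le_rfl, hπ2.le⟩ ⟨h, hx.2.le⟩ h
  have hd0 : deriv U (π / 2) = 0 := hlmax.deriv_eq_zero
  -- conservation of energy
  have hFd : ∀ x, HasDerivAt
      (fun y => κ ^ 2 / 2 * (deriv U y) ^ 2 + (U y) ^ 2 / 2 - (U y) ^ 4 / 4) 0 x := by
    intro x
    have h1 : HasDerivAt U (deriv U x) x := (hdU x).hasDerivAt
    have h2' : HasDerivAt (deriv U) (deriv (deriv U) x) x := (hdU' x).hasDerivAt
    have hD : HasDerivAt (fun y => κ ^ 2 / 2 * (deriv U y) ^ 2 + (U y) ^ 2 / 2 - (U y) ^ 4 / 4)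
        (κ ^ 2 / 2 * ((2 : ℕ) * deriv U x ^ (2 - 1) * deriv (deriv U) x)
          + ((2 : ℕ) * U x ^ (2 - 1) * deriv U x) / 2
          - ((4 : ℕ) * U x ^ (4 - 1) * deriv U x) / 4) x :=
      (((h2'.pow 2).const_mul (κ ^ 2 / 2)).add ((h1.pow 2).div_const 2)).sub
        ((h1.pow 4).div_const 4)
    convert hD using 1
    have h := hode x
    push_cast
    norm_num
    linear_combination (-(deriv U x)) * h
  have hFconst : ∀ x, κ ^ 2 / 2 * (deriv U x) ^ 2 + (U x) ^ 2 / 2 - (U x) ^ 4 / 4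
      = N ^ 2 / 2 - N ^ 4 / 4 := by
    intro x
    have := is_const_of_deriv_eq_zero (f := fun y =>
        κ ^ 2 / 2 * (deriv U y) ^ 2 + (U y) ^ 2 / 2 - (U y) ^ 4 / 4)
      (fun y => (hFd y).differentiableAt) (fun y => (hFd y).deriv) x (π / 2)
    rw [this, hd0]
    ring
  have hcons : ∀ x, κ ^ 2 * (deriv U x) ^ 2 = (N ^ 2 - U x ^ 2) * (2 - N ^ 2 - U x ^ 2) / 2 := by
    intro x
    linear_combination 2 * hFconst x
  -- bounds on U
  have hUmem : ∀ x ∈ Icc (0:ℝ) (π / 2), 0 ≤ U x ∧ U x ≤ N := by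
    intro x hx
    constructor
    · rw [← hU0]; exact hmono.monotoneOn ⟨le_rfl, hπ.le⟩ hx hx.1
    · exact hmono.monotoneOn hx ⟨hπ.le, le_rfl⟩ hx.2
  have hNpos : 0 < N := by
    have := hmono ⟨le_rfl, hπ.le⟩ ⟨hπ.le, le_rfl⟩ hπ
    rwa [hU0] at this
  -- N < 1
  have hN1 : N < 1 := by
    by_contra hcon
    push_neg at hcon
    have hd0pos := hpos 0 ⟨le_rfl, hπ⟩
    have hc0 := hcons 0
    rw [hU0] at hc0
    have hN2 : N ^ 2 < 2 := by
      have hppos : 0 < κ ^ 2 * deriv U 0 ^ 2 := mul_pos (pow_pos hκ 2) (pow_pos hd0pos 2)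
      nlinarith [hppos, sq_nonneg N]
    rcases eq_or_lt_of_le hcon with h1 | h1
    · -- N = 1 : arctanh argument
      obtain ⟨s, hs⟩ : ∃ s : ℝ, s = Real.sqrt 2 * κ := ⟨_, rfl⟩
      have hs2 : Real.sqrt 2 ^ 2 = 2 := Real.sq_sqrt (by norm_num)
      have hspos : 0 < s := by rw [hs]; positivity
      have hder : ∀ x ∈ Ico (0:ℝ) (π / 2), deriv U x * s = 1 - U x ^ 2 := by
        intro x hx
        have hu := hUmem x ⟨hx.1, hx.2.le⟩
        have hulim : U x < N := hmono ⟨hx.1, hx.2.le⟩ ⟨hπ.le, le_rfl⟩ hx.2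
        have hc := hcons x
        rw [← h1] at hc
        have hd := hpos x hx
        have h2' : (deriv U x * s) ^ 2 = (1 - U x ^ 2) ^ 2 := by
          rw [hs]
          linear_combination (deriv U x) ^ 2 * κ ^ 2 * hs2 + 2 * hc
        have h3 : (deriv U x * s - (1 - U x ^ 2)) * (deriv U x * s + (1 - U x ^ 2)) = 0 := by
          linear_combination h2'
        rcases mul_eq_zero.mp h3 with h4 | h4
        · linarith
        · have hu1 : U x < 1 := by rw [h1]; exact hulim
          have := mul_pos hd hspos
          nlinarith [sq_nonneg (U x)]
      -- the function s/2 (log(1+U) - log(1-U)) - x is constant on [0, π/2)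
      have hbound : ∀ x ∈ Ico (0:ℝ) (π / 2), Real.exp (-(π / s)) ≤ 1 - U x := by
        intro x hx
        have hcont : ContinuousOn (fun y =>
            s / 2 * (Real.log (1 + U y) - Real.log (1 - U y)) - y) (Icc 0 x) := by
          apply ContinuousOn.sub ?_ continuousOn_id
          apply ContinuousOn.mul continuousOn_const
          apply ContinuousOn.sub
          · apply ContinuousOn.log (by fun_prop)
            intro y hy
            have hu := hUmem y ⟨hy.1, le_trans hy.2 hx.2.le⟩
            intro hzero; linarith [hu.1]
          · apply ContinuousOn.log (by fun_prop)
            intro y hy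
            have hulim : U y < 1 := by
              rw [h1, hNdef]
              exact hmono ⟨hy.1, by linarith [hy.2, hx.2]⟩ ⟨hπ.le, le_rfl⟩
                (lt_of_le_of_lt hy.2 hx.2)
            intro hzero; linarith
        have hderiv : ∀ y ∈ Ico 0 x, HasDerivWithinAt (fun y =>
            s / 2 * (Real.log (1 + U y) - Real.log (1 - U y)) - y) 0 (Ici y) y := by
          intro y hy
          have hy' : y ∈ Ico (0:ℝ) (π / 2) := ⟨hy.1, lt_trans hy.2 hx.2⟩
          have hu := hUmem y ⟨hy'.1, hy'.2.le⟩
          have hulim : U y < 1 := by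
            rw [h1, hNdef]
            exact hmono ⟨hy'.1, hy'.2.le⟩ ⟨hπ.le, le_rfl⟩ hy'.2
          have h1u : (1 : ℝ) + U y ≠ 0 := by intro h'; linarith [hu.1]
          have h2u : (1 : ℝ) - U y ≠ 0 := by intro h'; linarith
          have hUy : HasDerivAt U (deriv U y) y := (hdU y).hasDerivAt
          have hL1 : HasDerivAt (fun z => Real.log (1 + U z)) (deriv U y / (1 + U y)) y := by
            have := ((hasDerivAt_const y (1:ℝ)).add hUy).log (by simpa using h1u)
            simpa using this
          have hL2 : HasDerivAt (fun z => Real.log (1 - U z)) (-(deriv U y) / (1 - U y)) y := by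
            have := ((hasDerivAt_const y (1:ℝ)).sub hUy).log (by simpa using h2u)
            simpa using this
          have hh : HasDerivAt (fun z => s / 2 * (Real.log (1 + U z) - Real.log (1 - U z)) - z)
              (s / 2 * (deriv U y / (1 + U y) - -(deriv U y) / (1 - U y)) - 1) y :=
            (((hL1.sub hL2).const_mul (s / 2))).sub (hasDerivAt_id y)
          have hds := hder y hy'
          have h3u : (1:ℝ) - U y ^ 2 ≠ 0 := by nlinarith [hu.1]
          have hval : s / 2 * (deriv U y / (1 + U y) - -(deriv U y) / (1 - U y)) - 1 = 0 := by
            have e1 : s / 2 * (deriv U y / (1 + U y) - -(deriv U y) / (1 - U y)) - 1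
                = (deriv U y * s - (1 - U y ^ 2)) / (1 - U y ^ 2) := by
              field_simp
              ring
            rw [e1, hds]
            simp
          rw [hval] at hh
          exact hh.hasDerivWithinAt
        have hconst := constant_of_has_deriv_right_zero hcont hderiv x ⟨hx.1, le_rfl⟩
        have hu := hUmem x ⟨hx.1, hx.2.le⟩
        have hulim : U x < 1 := by
          rw [h1, hNdef]
          exact hmono ⟨hx.1, hx.2.le⟩ ⟨hπ.le, le_rfl⟩ hx.2
        rw [hU0] at hconst
        norm_num at hconst
        have hlog1 : 0 ≤ Real.log (1 + U x) := Real.log_nonneg (by linarith)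
        have hlog2 : Real.log (1 - U x) = Real.log (1 + U x) - 2 * x / s := by
          have hsne : s ≠ 0 := ne_of_gt hspos
          field_simp at hconst ⊢
          linarith
        have hle : -(π / s) ≤ Real.log (1 - U x) := by
          rw [hlog2]
          have : 2 * x / s ≤ π / s := (div_le_div_iff_of_pos_right hspos).mpr (by linarith [hx.2])
          linarith
        calc Real.exp (-(π / s)) ≤ Real.exp (Real.log (1 - U x)) := Real.exp_le_exp.mpr hle
          _ = 1 - U x := Real.exp_log (by linarith)
      -- contradiction: U x → 1 but 1 - U x ≥ exp(-(π/s))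
      have hεpos : 0 < Real.exp (-(π / s)) := Real.exp_pos _
      have t1 : Filter.Tendsto U (nhdsWithin (π / 2) (Iio (π / 2))) (nhds N) :=
        (hcU.continuousAt (x := π / 2)).continuousWithinAt.tendsto
      have t2 : ∀ᶠ x in nhdsWithin (π / 2) (Iio (π / 2)),
          1 - Real.exp (-(π / s)) < U x := by
        rw [← h1] at t1
        exact t1.eventually (eventually_gt_nhds (by linarith))
      have t3 : ∀ᶠ x in nhdsWithin (π / 2) (Iio (π / 2)), 0 ≤ x :=
        Filter.Eventually.filter_mono nhdsWithin_le_nhds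
          ((eventually_gt_nhds hπ).mono fun x hx => hx.le)
      have t4 : ∀ᶠ x in nhdsWithin (π / 2) (Iio (π / 2)), x < π / 2 :=
        eventually_mem_nhdsWithin.mono fun x hx => hx
      obtain ⟨x, hx2, hx3, hx4⟩ := (t2.and (t3.and t4)).exists
      have := hbound x ⟨hx3, hx4⟩
      linarith
    · -- 1 < N : IVT argument
      have hc : Real.sqrt (2 - N ^ 2) ∈ Ico (U 0) (U (π / 2)) := by
        rw [hU0]
        constructor
        · positivity
        · have h2N : 2 - N ^ 2 < N ^ 2 := by nlinarith
          calc Real.sqrt (2 - N ^ 2) < Real.sqrt (N ^ 2) :=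
                Real.sqrt_lt_sqrt (by nlinarith) h2N
            _ = N := Real.sqrt_sq hNpos.le
      obtain ⟨x₀, hx₀, hUx₀⟩ := intermediate_value_Ico hπ.le hcU.continuousOn hc
      have h0 := hcons x₀
      rw [hUx₀, Real.sq_sqrt (by nlinarith : (0:ℝ) ≤ 2 - N ^ 2)] at h0
      have hdx := hpos x₀ hx₀
      have : 0 < κ ^ 2 * deriv U x₀ ^ 2 := by positivity
      nlinarith [this]
  -- positivity of the key quantity
  have hDpos : ∀ x ∈ Icc (0:ℝ) (π / 2), 0 < 2 - N ^ 2 - U x ^ 2 := by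
    intro x hx
    obtain ⟨h0, h1'⟩ := hUmem x hx
    nlinarith
  have hs2 : Real.sqrt 2 ^ 2 = 2 := Real.sq_sqrt (by norm_num)
  have hs2pos : (0:ℝ) < Real.sqrt 2 := by positivity
  -- the substitution φ(x) = arcsin (U x / N)
  have hφd : ∀ x ∈ Ioo (0:ℝ) (π / 2),
      HasDerivAt (fun y => Real.arcsin (U y / N))
        (Real.sqrt (2 - N ^ 2 - U x ^ 2) / (Real.sqrt 2 * κ)) x := by
    intro x hx
    have hu0 : 0 < U x := by
      rw [← hU0]; exact hmono ⟨le_rfl, hπ.le⟩ ⟨hx.1.le, hx.2.le⟩ hx.1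
    have huN : U x < N := hmono ⟨hx.1.le, hx.2.le⟩ ⟨hπ.le, le_rfl⟩ hx.2
    have h1' : U x / N ≠ -1 := by
      have : 0 < U x / N := by positivity
      intro h'; rw [h'] at this; linarith
    have h2' : U x / N ≠ 1 := ne_of_lt ((div_lt_one hNpos).mpr huN)
    have ha := Real.hasDerivAt_arcsin h1' h2'
    have hq : HasDerivAt (fun y => U y / N) (deriv U x / N) x := (hdU x).hasDerivAt.div_const N
    have hcomp : HasDerivAt (fun y => Real.arcsin (U y / N))
        (1 / Real.sqrt (1 - (U x / N) ^ 2) * (deriv U x / N)) x := (ha.comp x hq :)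
    set A := Real.sqrt (N ^ 2 - U x ^ 2) with hAdef
    set B := Real.sqrt (2 - N ^ 2 - U x ^ 2) with hBdef
    have hA : Real.sqrt (1 - (U x / N) ^ 2) = A / N := by
      rw [show 1 - (U x / N) ^ 2 = (N ^ 2 - U x ^ 2) / N ^ 2 by field_simp,
        Real.sqrt_div (by nlinarith), Real.sqrt_sq hNpos.le]
    have hApos : 0 < A := Real.sqrt_pos.mpr (by nlinarith)
    have hBpos : 0 < B := Real.sqrt_pos.mpr (hDpos x ⟨hx.1.le, hx.2.le⟩)
    have hdx : 0 < deriv U x := hpos x ⟨hx.1.le, hx.2⟩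
    have hAsq : A ^ 2 = N ^ 2 - U x ^ 2 := Real.sq_sqrt (by nlinarith)
    have hBsq : B ^ 2 = 2 - N ^ 2 - U x ^ 2 := Real.sq_sqrt (hDpos x ⟨hx.1.le, hx.2.le⟩).le
    have hkey : κ * deriv U x * Real.sqrt 2 = A * B := by
      have hsq : (κ * deriv U x * Real.sqrt 2) ^ 2 = (A * B) ^ 2 := by
        have hc := hcons x
        linear_combination κ ^ 2 * (deriv U x) ^ 2 * hs2 + 2 * hc
          - (N ^ 2 - U x ^ 2) * hBsq - B ^ 2 * hAsq
      have h3 : (κ * deriv U x * Real.sqrt 2 - A * B) *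
          (κ * deriv U x * Real.sqrt 2 + A * B) = 0 := by linear_combination hsq
      rcases mul_eq_zero.mp h3 with h4 | h4
      · linarith
      · nlinarith [mul_pos hApos hBpos, mul_pos (mul_pos hκ hdx) hs2pos]
    have hval : 1 / Real.sqrt (1 - (U x / N) ^ 2) * (deriv U x / N)
        = B / (Real.sqrt 2 * κ) := by
      rw [hA]
      rw [show 1 / (A / N) * (deriv U x / N) = deriv U x / A by
        field_simp]
      rw [div_eq_div_iff hApos.ne' (mul_pos hs2pos hκ).ne']
      linear_combination hkey
    rw [hval] at hcomp
    exact hcomp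
  -- change of variables θ = arcsin (U x / N)
  have huIcc : uIcc (0:ℝ) (π / 2) = Icc 0 (π / 2) := uIcc_of_le hπ.le
  have hφcont : ContinuousOn (fun y => Real.arcsin (U y / N)) (uIcc 0 (π / 2)) := by
    exact (Real.continuous_arcsin.comp (hcU.div_const N)).continuousOn
  have hff' : ∀ x ∈ Ioo (min (0:ℝ) (π / 2)) (max (0:ℝ) (π / 2)),
      HasDerivWithinAt (fun y => Real.arcsin (U y / N))
        (Real.sqrt (2 - N ^ 2 - U x ^ 2) / (Real.sqrt 2 * κ)) (Ioi x) x := by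
    rw [min_eq_left hπ.le, max_eq_right hπ.le]
    intro x hx
    exact (hφd x hx).hasDerivWithinAt
  have hDcont : ContinuousOn (fun x => Real.sqrt (2 - N ^ 2 - U x ^ 2) / (Real.sqrt 2 * κ))
      (uIcc 0 (π / 2)) := by
    apply Continuous.continuousOn
    exact ((continuous_const.sub (hcU.pow 2)).sqrt).div_const _
  have hN0 : N ≠ 0 := hNpos.ne'
  have hgpos : ∀ θ : ℝ, 0 < 2 - N ^ 2 * (1 + Real.sin θ ^ 2) := by
    intro θ
    have h1 : Real.sin θ ^ 2 ≤ 1 := Real.sin_sq_le_one θ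
    nlinarith [hNpos, hN1, sq_nonneg (Real.sin θ)]
  have hgcont : ContinuousOn (fun θ => 1 / Real.sqrt (2 - N ^ 2 * (1 + Real.sin θ ^ 2)))
      ((fun y => Real.arcsin (U y / N)) '' uIcc 0 (π / 2)) := by
    apply Continuous.continuousOn
    apply continuous_const.div
    · exact (continuous_const.sub (continuous_const.mul
        (continuous_const.add (Real.continuous_sin.pow 2)))).sqrt
    · intro θ
      exact (Real.sqrt_pos.mpr (hgpos θ)).ne'
  have key := intervalIntegral.integral_comp_smul_deriv'' hφcont hff' hDcont hgcont
  have hφ0 : Real.arcsin (U 0 / N) = 0 := by rw [hU0]; simp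
  have hφπ : Real.arcsin (U (π / 2) / N) = π / 2 := by
    rw [← hNdef, div_self hN0, Real.arcsin_one]
  rw [hφ0, hφπ] at key
  have hEqOn : Set.EqOn
      (fun x => (Real.sqrt (2 - N ^ 2 - U x ^ 2) / (Real.sqrt 2 * κ)) •
        ((fun θ => 1 / Real.sqrt (2 - N ^ 2 * (1 + Real.sin θ ^ 2))) ∘
          (fun y => Real.arcsin (U y / N))) x)
      (fun _ => 1 / (Real.sqrt 2 * κ)) (uIcc 0 (π / 2)) := by
    intro x hx
    rw [huIcc] at hx
    obtain ⟨hu0, huN⟩ := hUmem x hx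
    have hm1 : (-1 : ℝ) ≤ U x / N := by
      have : (0:ℝ) ≤ U x / N := div_nonneg hu0 hNpos.le
      linarith
    have hsin : Real.sin (Real.arcsin (U x / N)) = U x / N :=
      Real.sin_arcsin hm1 ((div_le_one hNpos).mpr huN)
    simp only [Function.comp_apply]
    rw [hsin]
    have hEq : 2 - N ^ 2 * (1 + (U x / N) ^ 2) = 2 - N ^ 2 - U x ^ 2 := by
      field_simp
      ring
    rw [hEq]
    have hBpos : 0 < Real.sqrt (2 - N ^ 2 - U x ^ 2) := Real.sqrt_pos.mpr (hDpos x hx)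
    rw [smul_eq_mul]
    field_simp
  have h2step : (∫ x in (0:ℝ)..(π / 2),
      (Real.sqrt (2 - N ^ 2 - U x ^ 2) / (Real.sqrt 2 * κ)) •
        ((fun θ => 1 / Real.sqrt (2 - N ^ 2 * (1 + Real.sin θ ^ 2))) ∘
          (fun y => Real.arcsin (U y / N))) x)
      = π / (2 * Real.sqrt 2 * κ) := by
    rw [intervalIntegral.integral_congr hEqOn, intervalIntegral.integral_const, smul_eq_mul]
    rw [sub_zero]
    field_simp
    try ring
    try simp
  exact key.symm.trans h2step
end
end

section
/- The function g : [0,1) → ℝ defined by g(N) = ∫₀^{π/2} (2 − N²(1 + sin²θ))^{−1/2} dθ tends to +∞ as N → 1⁻; that is, for every M > 0 there exists δ ∈ (0,1) such that g(N) > M whenever 1 − δ < N < 1. -/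
set_option maxHeartbeats 800000


open Real MeasureTheory Set

noncomputable section

/-- `g(N) = ∫₀^{π/2} (2 − N²(1+sin²θ))^{−1/2} dθ → +∞` as `N → 1⁻`. -/
theorem g_tendsto_top :
    ∀ M : ℝ, 0 < M → ∃ δ : ℝ, 0 < δ ∧ δ < 1 ∧
      ∀ N : ℝ, 1 - δ < N → N < 1 →
        (∫ θ in (0 : ℝ)..(π / 2), 1 / Real.sqrt (2 - N ^ 2 * (1 + Real.sin θ ^ 2))) > M := by
  intro M hM
  have hexpM : (1 : ℝ) < Real.exp M := by nlinarith [Real.add_one_le_exp M]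
  have hπ : 0 < π := Real.pi_pos
  refine ⟨min (1/2) (π^2/(16 * Real.exp M ^ 2)), ?_, ?_, ?_⟩
  · have : 0 < π^2/(16 * Real.exp M ^ 2) := by positivity
    exact lt_min (by norm_num) this
  · exact lt_of_le_of_lt (min_le_left _ _) (by norm_num)
  · intro N h1 h2
    have hδ2 : min (1/2) (π^2/(16 * Real.exp M ^ 2)) ≤ 1/2 := min_le_left _ _
    have hδπ : min (1/2) (π^2/(16 * Real.exp M ^ 2)) ≤ π^2/(16 * Real.exp M ^ 2) :=
      min_le_right _ _
    have hN0 : (0:ℝ) < N := by linarith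
    have hN2 : N^2 < 1 := by nlinarith
    obtain ⟨ε, hεpos, hεsq⟩ : ∃ ε : ℝ, 0 < ε ∧ ε ^ 2 = 2 * (1 - N ^ 2) :=
      ⟨Real.sqrt (2*(1 - N^2)), Real.sqrt_pos.mpr (by nlinarith),
        Real.sq_sqrt (by nlinarith)⟩
    -- ε is small
    have hεsmall : ε * Real.exp M < π / 2 := by
      have hδπ' : (min (1/2) (π^2/(16 * Real.exp M ^ 2))) * (16 * Real.exp M ^ 2) ≤ π^2 :=
        (le_div_iff₀ (by positivity)).mp hδπ
      have h1' : (1 - N^2) * (16 * Real.exp M ^ 2) < 2 * π^2 := by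
        have hm : 1 - N^2 < 2 * (min (1/2) (π^2/(16 * Real.exp M ^ 2))) := by nlinarith
        have hp16 : (0:ℝ) < 16 * Real.exp M ^ 2 := by positivity
        nlinarith [mul_lt_mul_of_pos_right hm hp16, hδπ']
      have hεsq' : ε^2 < (π / (2 * Real.exp M))^2 := by
        rw [hεsq, div_pow]
        have hden : (2 * Real.exp M)^2 = 4 * Real.exp M ^ 2 := by ring
        rw [hden, lt_div_iff₀ (by positivity)]
        nlinarith [Real.exp_pos M]
      have : ε < π / (2 * Real.exp M) := by
        nlinarith [hεpos, Real.sqrt_nonneg (2*(1-N^2)), div_pos hπ (by positivity : (0:ℝ) < 2 * Real.exp M)]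
      calc ε * Real.exp M < (π / (2 * Real.exp M)) * Real.exp M := by
            exact mul_lt_mul_of_pos_right this (Real.exp_pos M)
        _ = π / 2 := by field_simp
    -- pointwise positivity of the inner expression
    have hpos : ∀ θ : ℝ, 0 < 2 - N ^ 2 * (1 + Real.sin θ ^ 2) := by
      intro θ
      have hs : Real.sin θ ^ 2 + Real.cos θ ^ 2 = 1 := Real.sin_sq_add_cos_sq θ
      nlinarith [sq_nonneg (Real.cos θ), sq_nonneg (N * Real.cos θ)]
    -- pointwise lower bound
    have hbound : ∀ θ ∈ Set.Icc (0:ℝ) (π/2),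
        1 / (ε + (π/2 - θ)) ≤ 1 / Real.sqrt (2 - N ^ 2 * (1 + Real.sin θ ^ 2)) := by
      intro θ hθ
      obtain ⟨hθ0, hθπ⟩ := hθ
      have hcos : 0 ≤ Real.cos θ := Real.cos_nonneg_of_mem_Icc ⟨by linarith, hθπ⟩
      have hkey : 2 - N ^ 2 * (1 + Real.sin θ ^ 2) = 2*(1 - N^2) + (N * Real.cos θ)^2 := by
        have hs : Real.sin θ ^ 2 + Real.cos θ ^ 2 = 1 := Real.sin_sq_add_cos_sq θ
        nlinarith
      have hsqrtpos : 0 < Real.sqrt (2 - N ^ 2 * (1 + Real.sin θ ^ 2)) :=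
        Real.sqrt_pos.mpr (hpos θ)
      apply one_div_le_one_div_of_le hsqrtpos
      -- √(2(1-N²) + (N cos θ)²) ≤ ε + N cos θ ≤ ε + (π/2 - θ)
      have hb : 0 ≤ N * Real.cos θ := mul_nonneg hN0.le hcos
      have step1 : Real.sqrt (2 - N ^ 2 * (1 + Real.sin θ ^ 2)) ≤ ε + N * Real.cos θ := by
        rw [hkey]
        have h2 : 2*(1 - N^2) + (N * Real.cos θ)^2 ≤ (ε + N * Real.cos θ)^2 := by
          nlinarith [hεsq, mul_nonneg hεpos.le hb]
        calc Real.sqrt (2*(1 - N^2) + (N * Real.cos θ)^2)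
            ≤ Real.sqrt ((ε + N * Real.cos θ)^2) := Real.sqrt_le_sqrt h2
          _ = ε + N * Real.cos θ := Real.sqrt_sq (by positivity)
      have step2 : N * Real.cos θ ≤ π/2 - θ := by
        have hc : Real.cos θ = Real.sin (π/2 - θ) := (Real.sin_pi_div_two_sub θ).symm
        have hsin : Real.sin (π/2 - θ) ≤ π/2 - θ := Real.sin_le (by linarith)
        have : N * Real.cos θ ≤ Real.cos θ := by nlinarith
        linarith [hc ▸ hsin]
      linarith
    -- integrability of both sides
    have hdenom : ∀ θ ∈ Set.uIcc (0:ℝ) (π/2), ε + (π/2 - θ) ≠ 0 := by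
      intro θ hθ
      rw [Set.uIcc_of_le (by linarith)] at hθ
      have := hθ.2
      have : 0 < ε + (π/2 - θ) := by linarith
      linarith
    have hint1 : IntervalIntegrable (fun θ => 1 / (ε + (π/2 - θ))) volume 0 (π/2) := by
      apply ContinuousOn.intervalIntegrable
      apply ContinuousOn.div continuousOn_const
      · exact (continuousOn_const.add (continuousOn_const.sub continuousOn_id))
      · exact hdenom
    have hint2 : IntervalIntegrable
        (fun θ => 1 / Real.sqrt (2 - N ^ 2 * (1 + Real.sin θ ^ 2))) volume 0 (π/2) := by
      apply ContinuousOn.intervalIntegrable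
      apply ContinuousOn.div continuousOn_const
      · exact (Real.continuous_sqrt.comp (by continuity)).continuousOn
      · intro θ _
        exact ne_of_gt (Real.sqrt_pos.mpr (hpos θ))
    -- integral comparison
    have hmono : (∫ θ in (0:ℝ)..(π/2), 1 / (ε + (π/2 - θ)))
        ≤ ∫ θ in (0:ℝ)..(π/2), 1 / Real.sqrt (2 - N ^ 2 * (1 + Real.sin θ ^ 2)) :=
      intervalIntegral.integral_mono_on (by linarith) hint1 hint2 hbound
    -- compute the lower integral
    have hcalc : (∫ θ in (0:ℝ)..(π/2), 1 / (ε + (π/2 - θ)))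
        = Real.log (ε + π/2) - Real.log ε := by
      have hderiv : ∀ θ ∈ Set.uIcc (0:ℝ) (π/2),
          HasDerivAt (fun t => -Real.log (ε + (π/2 - t))) (1 / (ε + (π/2 - θ))) θ := by
        intro θ hθ
        have hne : ε + (π/2 - θ) ≠ 0 := hdenom θ hθ
        have hin : HasDerivAt (fun t : ℝ => ε + (π/2 - t)) (-1) θ := by
          have := (hasDerivAt_id θ).const_sub (ε + π/2)
          simpa [add_sub_assoc] using this
        have hlog := (Real.hasDerivAt_log hne).comp θ hin
        have := hlog.neg
        convert this using 1
        · rfl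
        · rfl
        · rfl
        · ring
      have := intervalIntegral.integral_eq_sub_of_hasDerivAt hderiv hint1
      rw [this]
      norm_num
      ring
    rw [hcalc] at hmono
    -- conclude
    have hfinal : M < Real.log (ε + π/2) - Real.log ε := by
      rw [← Real.log_div (by positivity) (ne_of_gt hεpos)]
      rw [Real.lt_log_iff_exp_lt (by positivity)]
      rw [lt_div_iff₀ hεpos]
      nlinarith
    linarith
end
end

section
/- Let κ > 0. If there exists an odd zero-up ground state for parameter κ, then κ < 1. -/
open Real MeasureTheory Set

noncomputable section

/-- if an odd zero-up ground state for parameter `κ > 0` exists then `κ < 1`. -/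
theorem ground_state_exists_implies_kappa_lt_one (κ : ℝ) (hκ : 0 < κ)
    (h : ∃ U : ℝ → ℝ, IsOddZeroUpGroundState κ U) :
    κ < 1 := by
  by_contra hk
  push_neg at hk
  have hk2 : 1 ≤ κ ^ 2 := by nlinarith
  obtain ⟨U, hC, hper, hodd, hode, hup, hdn⟩ := h
  have hπ := Real.pi_pos
  have h0 : U 0 = 0 := by have := hodd 0; simp at this; linarith
  have hπ0 : U π = 0 := by
    have h1 : U (-π) = - U π := hodd π
    have h2 := hper (-π)
    have h3 : -π + 2 * π = π := by ring
    rw [h3] at h2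
    linarith [h2, h1]
  -- differentiability facts
  have hC2 : ContDiff ℝ ((1 : ℕ) + 1) U := by exact_mod_cast hC
  rw [contDiff_succ_iff_deriv] at hC2
  have hU : Differentiable ℝ U := hC2.1
  have hU1 : ContDiff ℝ 1 (deriv U) := by exact_mod_cast hC2.2.2
  have hU' : Differentiable ℝ (deriv U) := hU1.differentiable one_ne_zero
  set W : ℝ → ℝ := fun x => κ ^ 2 * (deriv U x * Real.sin x - U x * Real.cos x) with hWdef
  set g : ℝ → ℝ := fun x => U x ^ 3 * Real.sin x + (κ ^ 2 - 1) * (U x * Real.sin x) with hgdef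
  have hW : ∀ x : ℝ, HasDerivAt W (g x) x := by
    intro x
    have hu : HasDerivAt U (deriv U x) x := (hU x).hasDerivAt
    have hu' : HasDerivAt (deriv U) (deriv (deriv U) x) x := (hU' x).hasDerivAt
    have hs : HasDerivAt Real.sin (Real.cos x) x := Real.hasDerivAt_sin x
    have hc : HasDerivAt Real.cos (-Real.sin x) x := Real.hasDerivAt_cos x
    have hd := ((hu'.mul hs).sub (hu.mul hc)).const_mul (κ ^ 2)
    have hode' : κ ^ 2 * deriv (deriv U) x = U x ^ 3 - U x := by linarith [hode x]
    refine hd.congr_deriv ?_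
    simp only [hgdef]
    linear_combination (Real.sin x) * hode'
  -- positivity of U on (0, π)
  have hmono : StrictMonoOn U (Icc 0 (π / 2)) := by
    apply strictMonoOn_of_deriv_pos (convex_Icc _ _) hC.continuous.continuousOn
    intro x hx
    rw [interior_Icc] at hx
    exact hup x ⟨hx.1.le, hx.2⟩
  have hanti : StrictAntiOn U (Icc (π / 2) π) := by
    apply strictAntiOn_of_deriv_neg (convex_Icc _ _) hC.continuous.continuousOn
    intro x hx
    rw [interior_Icc] at hx
    exact hdn x ⟨hx.1, hx.2.le⟩
  have hpos : ∀ x ∈ Ioo (0 : ℝ) π, 0 < U x := by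
    intro x hx
    rcases le_or_gt x (π / 2) with h1 | h1
    · have := hmono ⟨le_rfl, by linarith⟩ ⟨hx.1.le, h1⟩ hx.1
      rwa [h0] at this
    · have := hanti ⟨h1.le, hx.2.le⟩ ⟨by linarith, le_rfl⟩ hx.2
      rwa [hπ0] at this
  have hgpos : ∀ x ∈ Ioo (0 : ℝ) π, 0 < g x := by
    intro x hx
    have hs := Real.sin_pos_of_pos_of_lt_pi hx.1 hx.2
    have hu := hpos x hx
    have : 0 < U x ^ 3 * Real.sin x := by positivity
    have h2 : 0 ≤ (κ ^ 2 - 1) * (U x * Real.sin x) := by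
      apply mul_nonneg (by linarith) (by positivity)
    simp only [hgdef]
    linarith
  have hgc : Continuous g := by
    apply Continuous.add
    · exact (hC.continuous.pow 3).mul Real.continuous_sin
    · exact continuous_const.mul (hC.continuous.mul Real.continuous_sin)
  have hint := intervalIntegral.integral_eq_sub_of_hasDerivAt
    (f := W) (f' := g) (a := 0) (b := π)
    (fun x _ => hW x) (hgc.intervalIntegrable 0 π)
  have hWends : W π - W 0 = 0 := by
    simp [hWdef, h0, hπ0, Real.sin_pi, Real.sin_zero]
  have hposint : 0 < ∫ x in (0:ℝ)..π, g x :=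
    intervalIntegral.intervalIntegral_pos_of_pos_on (hgc.intervalIntegrable 0 π) hgpos hπ
  rw [hint, hWends] at hposint
  exact lt_irrefl 0 hposint
end
end

section
/- Let κ ∈ (0,1). If U₁ and U₂ are both odd zero-up ground states for parameter κ, then U₁(x) = U₂(x) for all x ∈ ℝ. -/
open Real MeasureTheory Set

noncomputable section

/-- The potential `F(u) = u²/2 - u⁴/4`. -/
def FF (u : ℝ) : ℝ := u ^ 2 / 2 - u ^ 4 / 4

/-- Basic consequences of being an odd zero-up ground state. -/
structure GSfacts (κ : ℝ) (U : ℝ → ℝ) : Prop where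
  u0 : U 0 = 0
  dpi : deriv U (π / 2) = 0
  en : ∀ x : ℝ, κ ^ 2 * (deriv U x) ^ 2 = 2 * (FF (U (π / 2)) - FF (U x))
  mono : StrictMonoOn U (Icc 0 (π / 2))
  dnn : ∀ x ∈ Icc (0 : ℝ) (π / 2), 0 ≤ deriv U x
  d1 : Differentiable ℝ U
  d2 : Differentiable ℝ (deriv U)
  dd : ∀ x : ℝ, deriv (deriv U) x = (U x ^ 3 - U x) / κ ^ 2
  d0pos : 0 < deriv U 0
  dsqrt : ∀ x ∈ Icc (0 : ℝ) (π / 2),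
    κ * deriv U x = Real.sqrt (2 * (FF (U (π / 2)) - FF (U x)))

lemma gs_basic (κ : ℝ) (hκ : 0 < κ) (U : ℝ → ℝ) (hU : IsOddZeroUpGroundState κ U) :
    GSfacts κ U := by
  obtain ⟨hC, hper, hodd, hode, hpos, hneg⟩ := hU
  have hπ : 0 < π / 2 := by positivity
  have hd1 : Differentiable ℝ U := hC.differentiable (by norm_num)
  have hC' : ContDiff ℝ 1 (deriv U) := by
    have := (contDiff_succ_iff_deriv (n := 1)).mp (hC.of_le (by norm_num))
    exact this.2.2
  have hd2 : Differentiable ℝ (deriv U) := hC'.differentiable (by norm_num)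
  have hcont2 : Continuous (deriv U) := hd2.continuous
  have hU0 : U 0 = 0 := by have := hodd 0; simp at this; linarith
  have hdpi : deriv U (π / 2) = 0 := by
    have hle : 0 ≤ deriv U (π / 2) := by
      have htd : Filter.Tendsto (deriv U) (nhdsWithin (π/2) (Iio (π/2))) (nhds (deriv U (π/2))) :=
        (hcont2.continuousAt).continuousWithinAt.tendsto
      refine ge_of_tendsto htd ?_
      filter_upwards [Ioo_mem_nhdsLT_of_mem (by constructor <;> [exact hπ; exact le_rfl] :
        π/2 ∈ Ioc (0:ℝ) (π/2))] with x hx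
      exact (hpos x ⟨hx.1.le, hx.2⟩).le
    have hge : deriv U (π / 2) ≤ 0 := by
      have htd : Filter.Tendsto (deriv U) (nhdsWithin (π/2) (Ioi (π/2))) (nhds (deriv U (π/2))) :=
        (hcont2.continuousAt).continuousWithinAt.tendsto
      refine le_of_tendsto htd ?_
      filter_upwards [Ioo_mem_nhdsGT_of_mem (by constructor <;> [exact le_rfl; linarith [pi_pos]] :
        π/2 ∈ Ico (π/2) π)] with x hx
      exact (hneg x ⟨hx.1, hx.2.le⟩).le
    linarith
  have hode' : ∀ x, deriv (deriv U) x = (U x ^ 3 - U x) / κ ^ 2 := by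
    intro x
    have h := hode x
    field_simp
    linarith
  have hE : ∀ x, HasDerivAt (fun x => κ ^ 2 / 2 * (deriv U x) ^ 2 + FF (U x)) 0 x := by
    intro x
    have h1 : HasDerivAt (fun x => κ ^ 2 / 2 * (deriv U x) ^ 2)
        (κ ^ 2 / 2 * ((2 : ℕ) * (deriv U x) ^ 1 * deriv (deriv U) x)) x :=
      (((hd2 x).hasDerivAt).pow 2).const_mul _
    have h2 : HasDerivAt (fun x => FF (U x))
        ((2 : ℕ) * U x ^ 1 * deriv U x / 2 - (4 : ℕ) * U x ^ 3 * deriv U x / 4) x := by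
      have hu : HasDerivAt U (deriv U x) x := (hd1 x).hasDerivAt
      exact ((hu.pow 2).div_const 2).sub ((hu.pow 4).div_const 4)
    have := h1.add h2
    refine this.congr_deriv ?_
    have h := hode x
    push_cast
    linear_combination (deriv U x) * h
  have hconst : ∀ x, κ ^ 2 / 2 * (deriv U x) ^ 2 + FF (U x)
      = κ ^ 2 / 2 * (deriv U (π/2)) ^ 2 + FF (U (π/2)) :=
    fun x => is_const_of_deriv_eq_zero
      (fun y => (hE y).differentiableAt) (fun y => (hE y).deriv) x (π/2)
  have henergy : ∀ x : ℝ, κ ^ 2 * (deriv U x) ^ 2 = 2 * (FF (U (π / 2)) - FF (U x)) := by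
    intro x
    have := hconst x
    rw [hdpi] at this
    nlinarith
  have hmono : StrictMonoOn U (Icc 0 (π / 2)) := by
    apply strictMonoOn_of_deriv_pos (convex_Icc _ _) (hd1.continuous.continuousOn)
    intro x hx
    rw [interior_Icc] at hx
    exact hpos x ⟨hx.1.le, hx.2⟩
  have hdnn : ∀ x ∈ Icc (0 : ℝ) (π / 2), 0 ≤ deriv U x := by
    intro x hx
    rcases lt_or_eq_of_le hx.2 with h | h
    · exact (hpos x ⟨hx.1, h⟩).le
    · rw [h, hdpi]
  refine ⟨hU0, hdpi, henergy, hmono, hdnn, hd1, hd2, hode',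
    hpos 0 ⟨le_rfl, hπ⟩, ?_⟩
  intro x hx
  have h1 : (κ * deriv U x) ^ 2 = 2 * (FF (U (π / 2)) - FF (U x)) := by
    rw [mul_pow]; exact henergy x
  rw [← h1, Real.sqrt_sq (mul_nonneg hκ.le (hdnn x hx))]

/-- The key comparison: two ground states cannot have strictly ordered energies. -/
lemma gs_no_lt (κ : ℝ) (hκ : 0 < κ) (U₁ U₂ : ℝ → ℝ)
    (hU₁ : IsOddZeroUpGroundState κ U₁) (hU₂ : IsOddZeroUpGroundState κ U₂)
    (hlt : FF (U₁ (π / 2)) < FF (U₂ (π / 2))) : False := by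
  have g1 := gs_basic κ hκ U₁ hU₁
  have g2 := gs_basic κ hκ U₂ hU₂
  have hπ : 0 < π / 2 := by positivity
  set E₁ := FF (U₁ (π / 2)) with hE₁
  set E₂ := FF (U₂ (π / 2)) with hE₂
  set h : ℝ → ℝ := fun x => U₂ x - U₁ x with hh
  have hder : ∀ x, HasDerivAt h (deriv U₂ x - deriv U₁ x) x :=
    fun x => ((g2.d1 x).hasDerivAt.sub (g1.d1 x).hasDerivAt)
  have hcont : Continuous h := (g2.d1.continuous).sub (g1.d1.continuous)
  -- wherever the solutions agree on [0, π/2], U₂ moves strictly faster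
  have hzd : ∀ x ∈ Icc (0:ℝ) (π/2), U₁ x = U₂ x → deriv U₁ x < deriv U₂ x := by
    intro x hx heq
    have e1 := g1.en x
    have h1nn : 0 ≤ E₁ - FF (U₁ x) := by
      nlinarith [mul_nonneg (sq_nonneg κ) (sq_nonneg (deriv U₁ x))]
    have hlt2 : Real.sqrt (2 * (E₁ - FF (U₁ x))) < Real.sqrt (2 * (E₂ - FF (U₂ x))) := by
      rw [← heq]
      exact Real.sqrt_lt_sqrt (by linarith) (by linarith)
    have q1 := g1.dsqrt x hx
    have q2 := g2.dsqrt x hx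
    rw [← hE₁] at q1
    rw [← hE₂] at q2
    rw [← q1, ← q2] at hlt2
    exact lt_of_mul_lt_mul_left hlt2 hκ.le
  have h0 : h 0 = 0 := by simp [hh, g1.u0, g2.u0]
  have hd0 : 0 < deriv U₂ 0 - deriv U₁ 0 := by
    have := hzd 0 ⟨le_rfl, hπ.le⟩ (by rw [g1.u0, g2.u0])
    linarith
  -- h is positive on a right neighbourhood of 0
  obtain ⟨δ, hδpos, hδle, hδ⟩ : ∃ δ, 0 < δ ∧ δ ≤ π/2 ∧ ∀ x ∈ Ioo (0:ℝ) δ, 0 < h x := by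
    have hslope := hasDerivAt_iff_tendsto_slope.mp (hder 0)
    have hmono : nhdsWithin (0:ℝ) (Ioi 0) ≤ nhdsWithin 0 {0}ᶜ :=
      nhdsWithin_mono 0 (fun x hx => ne_of_gt hx)
    have hev : ∀ᶠ x in nhdsWithin (0:ℝ) (Ioi 0), 0 < slope h 0 x :=
      (hslope.mono_left hmono).eventually (eventually_gt_nhds hd0)
    obtain ⟨u, hu, hsub⟩ := mem_nhdsGT_iff_exists_Ioo_subset.mp hev
    refine ⟨min u (π/2), lt_min hu hπ, min_le_right _ _, ?_⟩
    intro x hx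
    have hsx := hsub ⟨hx.1, lt_of_lt_of_le hx.2 (min_le_left _ _)⟩
    simp only [slope, h0, vsub_eq_sub, sub_zero, smul_eq_mul] at hsx
    have := mul_pos hx.1 hsx
    rwa [mul_inv_cancel_left₀ (ne_of_gt hx.1)] at this
  -- h is positive on all of (0, π/2]
  have hposh : ∀ x ∈ Ioc (0:ℝ) (π/2), 0 < h x := by
    by_contra hcon
    push_neg at hcon
    obtain ⟨x₁, hx₁, hx₁le⟩ := hcon
    set S := {x | x ∈ Ioc (0:ℝ) (π/2) ∧ h x ≤ 0} with hS
    have hSne : S.Nonempty := ⟨x₁, hx₁, hx₁le⟩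
    have hSbdd : BddBelow S := ⟨0, fun x hx => hx.1.1.le⟩
    set x₀ := sInf S with hx₀
    have hδS : ∀ x ∈ S, δ ≤ x := by
      intro x hx
      by_contra hlt'
      push_neg at hlt'
      exact absurd (hδ x ⟨hx.1.1, hlt'⟩) (not_lt.mpr hx.2)
    have hx₀δ : δ ≤ x₀ := le_csInf hSne hδS
    have hx₀pos : 0 < x₀ := lt_of_lt_of_le hδpos hx₀δ
    have hx₀le : x₀ ≤ π/2 := le_trans (csInf_le hSbdd ⟨hx₁, hx₁le⟩) hx₁.2
    have hhx₀ : h x₀ ≤ 0 := by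
      have hcl : closure S ⊆ {x | h x ≤ 0} :=
        closure_minimal (fun x hx => hx.2) (isClosed_le hcont continuous_const)
      exact hcl (csInf_mem_closure hSne hSbdd)
    have hbefore : ∀ x ∈ Ioo (0:ℝ) x₀, 0 < h x := by
      intro x hx
      by_contra hc
      push_neg at hc
      have : x ∈ S := ⟨⟨hx.1, le_trans hx.2.le hx₀le⟩, hc⟩
      exact absurd (csInf_le hSbdd this) (not_le.mpr hx.2)
    have hge : 0 ≤ h x₀ := by
      have htd : Filter.Tendsto h (nhdsWithin x₀ (Iio x₀)) (nhds (h x₀)) :=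
        (hcont.continuousAt).continuousWithinAt.tendsto
      refine ge_of_tendsto htd ?_
      filter_upwards [Ioo_mem_nhdsLT_of_mem (⟨hx₀pos, le_rfl⟩ : x₀ ∈ Ioc 0 x₀)] with x hx
      exact (hbefore x hx).le
    have hh0 : h x₀ = 0 := le_antisymm hhx₀ hge
    have heq : U₁ x₀ = U₂ x₀ := by
      have : U₂ x₀ - U₁ x₀ = 0 := hh0
      linarith
    have hdlt := hzd x₀ ⟨hx₀pos.le, hx₀le⟩ heq
    -- but the left slopes of h at x₀ are negative
    have hslope2 := hasDerivAt_iff_tendsto_slope.mp (hder x₀)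
    have hmono2 : nhdsWithin x₀ (Iio x₀) ≤ nhdsWithin x₀ {x₀}ᶜ :=
      nhdsWithin_mono x₀ (fun x hx => ne_of_lt hx)
    have hle : deriv U₂ x₀ - deriv U₁ x₀ ≤ 0 := by
      refine le_of_tendsto (hslope2.mono_left hmono2) ?_
      filter_upwards [Ioo_mem_nhdsLT_of_mem (⟨hx₀pos, le_rfl⟩ : x₀ ∈ Ioc 0 x₀)] with x hx
      have h1 := hbefore x hx
      simp only [slope, hh0, vsub_eq_sub, sub_zero, smul_eq_mul]
      have hxneg : (x - x₀) < 0 := sub_neg.mpr hx.2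
      have h2 : (x - x₀)⁻¹ < 0 := inv_neg''.mpr hxneg
      exact (mul_neg_of_neg_of_pos h2 h1).le
    linarith
  -- Wronskian argument
  set W : ℝ → ℝ := fun x => deriv U₁ x * U₂ x - U₁ x * deriv U₂ x with hW
  have hWder : ∀ x, HasDerivAt W
      (deriv (deriv U₁) x * U₂ x - U₁ x * deriv (deriv U₂) x) x := by
    intro x
    have e1 : HasDerivAt (fun x => deriv U₁ x * U₂ x)
        (deriv (deriv U₁) x * U₂ x + deriv U₁ x * deriv U₂ x) x :=
      ((g1.d2 x).hasDerivAt.mul (g2.d1 x).hasDerivAt)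
    have e2 : HasDerivAt (fun x => U₁ x * deriv U₂ x)
        (deriv U₁ x * deriv U₂ x + U₁ x * deriv (deriv U₂) x) x :=
      ((g1.d1 x).hasDerivAt.mul (g2.d2 x).hasDerivAt)
    have := e1.sub e2
    exact this.congr_deriv (by ring)
  have hWcont : Continuous W :=
    (g1.d2.continuous.mul g2.d1.continuous).sub (g1.d1.continuous.mul g2.d2.continuous)
  have hWneg : ∀ x ∈ interior (Icc (0:ℝ) (π/2)), deriv W x < 0 := by
    intro x hx
    rw [interior_Icc] at hx
    rw [(hWder x).deriv]
    have hU1pos : 0 < U₁ x := by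
      have := g1.mono (⟨le_rfl, hπ.le⟩ : (0:ℝ) ∈ Icc 0 (π/2)) ⟨hx.1.le, hx.2.le⟩ hx.1
      rwa [g1.u0] at this
    have hU12 : U₁ x < U₂ x := by
      have := hposh x ⟨hx.1, hx.2.le⟩
      simp only [hh] at this
      linarith
    have hU2pos : 0 < U₂ x := lt_trans hU1pos hU12
    rw [g1.dd, g2.dd]
    rw [div_mul_eq_mul_div, mul_div_assoc', ← sub_div]
    apply div_neg_of_neg_of_pos _ (by positivity)
    have hsq : U₁ x ^ 2 < U₂ x ^ 2 := by nlinarith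
    nlinarith [mul_pos (mul_pos hU1pos hU2pos) (sub_pos.mpr hsq)]
  have hanti : StrictAntiOn W (Icc 0 (π/2)) :=
    strictAntiOn_of_deriv_neg (convex_Icc _ _) hWcont.continuousOn hWneg
  have := hanti (⟨le_rfl, hπ.le⟩ : (0:ℝ) ∈ Icc 0 (π/2)) ⟨hπ.le, le_rfl⟩ hπ
  simp only [hW, g1.u0, g2.u0, g1.dpi, g2.dpi] at this
  norm_num at this

lemma periodic_abs_bound {f : ℝ → ℝ} (hf : Continuous f) (hp : Function.Periodic f (2 * π)) :
    ∃ R : ℝ, ∀ t, |f t| ≤ R := by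
  obtain ⟨C, hC⟩ := (isCompact_Icc (a := (0:ℝ)) (b := 2*π)).exists_bound_of_continuousOn
    hf.continuousOn
  refine ⟨C, fun t => ?_⟩
  obtain ⟨y, hy, hfy⟩ := hp.exists_mem_Ico₀ (by positivity) t
  rw [hfy, ← Real.norm_eq_abs]
  exact hC y ⟨hy.1, hy.2.le⟩

lemma vfield_lip (κ R : ℝ) (hκ : 0 < κ) (hR : 0 ≤ R) :
    LipschitzOnWith (Real.toNNReal (max 1 ((3 * R ^ 2 + 1) / κ ^ 2)))
      (fun p : ℝ × ℝ => ((p.2 : ℝ), (p.1 ^ 3 - p.1) / κ ^ 2))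
      (Metric.closedBall (0 : ℝ × ℝ) R) := by
  rw [lipschitzOnWith_iff_dist_le_mul]
  intro p hp q hq
  have hKc : (Real.toNNReal (max 1 ((3 * R ^ 2 + 1) / κ ^ 2)) : ℝ)
      = max 1 ((3 * R ^ 2 + 1) / κ ^ 2) := by
    rw [Real.coe_toNNReal]
    exact le_trans zero_le_one (le_max_left _ _)
  rw [hKc]
  have hp1 : |p.1| ≤ R := by
    have := mem_closedBall_zero_iff.mp hp
    rw [Prod.norm_def] at this
    exact le_trans (le_max_left _ _) this
  have hq1 : |q.1| ≤ R := by
    have := mem_closedBall_zero_iff.mp hq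
    rw [Prod.norm_def] at this
    exact le_trans (le_max_left _ _) this
  rw [Prod.dist_eq]
  have hd1 : dist p.1 q.1 ≤ dist p q := by rw [Prod.dist_eq]; exact le_max_left _ _
  have hd2 : dist p.2 q.2 ≤ dist p q := by rw [Prod.dist_eq]; exact le_max_right _ _
  have hdnn : (0:ℝ) ≤ dist p q := dist_nonneg
  apply max_le
  · calc dist p.2 q.2 ≤ 1 * dist p q := by linarith
    _ ≤ max 1 ((3 * R ^ 2 + 1) / κ ^ 2) * dist p q :=
        mul_le_mul_of_nonneg_right (le_max_left _ _) hdnn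
  · have hnum : |p.1 ^ 3 - q.1 ^ 3 - (p.1 - q.1)| ≤ (3 * R ^ 2 + 1) * |p.1 - q.1| := by
      have hid : p.1 ^ 3 - q.1 ^ 3 - (p.1 - q.1)
          = (p.1 - q.1) * (p.1 ^ 2 + p.1 * q.1 + q.1 ^ 2 - 1) := by ring
      rw [hid, abs_mul, mul_comm]
      apply mul_le_mul_of_nonneg_right _ (abs_nonneg _)
      have hp2 : p.1 ^ 2 ≤ R ^ 2 := by
        rw [← sq_abs]; exact pow_le_pow_left₀ (abs_nonneg _) hp1 2
      have hq2 : q.1 ^ 2 ≤ R ^ 2 := by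
        rw [← sq_abs]; exact pow_le_pow_left₀ (abs_nonneg _) hq1 2
      have hpq : |p.1 * q.1| ≤ R ^ 2 := by
        rw [abs_mul]
        calc |p.1| * |q.1| ≤ R * R := mul_le_mul hp1 hq1 (abs_nonneg _) hR
        _ = R ^ 2 := by ring
      refine abs_le.mpr ⟨?_, ?_⟩
      · nlinarith [le_abs_self (p.1 * q.1), neg_abs_le (p.1 * q.1)]
      · nlinarith [le_abs_self (p.1 * q.1), neg_abs_le (p.1 * q.1)]
    have hκ2 : (0:ℝ) < κ ^ 2 := by positivity
    calc dist ((p.1 ^ 3 - p.1) / κ ^ 2) ((q.1 ^ 3 - q.1) / κ ^ 2)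
        = |p.1 ^ 3 - q.1 ^ 3 - (p.1 - q.1)| / κ ^ 2 := by
          rw [Real.dist_eq, ← sub_div, abs_div, abs_of_pos hκ2]
          ring_nf
    _ ≤ ((3 * R ^ 2 + 1) * |p.1 - q.1|) / κ ^ 2 := by
          apply div_le_div_of_nonneg_right hnum hκ2.le |>.trans_eq rfl
    _ = ((3 * R ^ 2 + 1) / κ ^ 2) * |p.1 - q.1| := by ring
    _ ≤ ((3 * R ^ 2 + 1) / κ ^ 2) * dist p q := by
          apply mul_le_mul_of_nonneg_left _ (by positivity)
          rw [← Real.dist_eq]; exact hd1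
    _ ≤ max 1 ((3 * R ^ 2 + 1) / κ ^ 2) * dist p q :=
          mul_le_mul_of_nonneg_right (le_max_right _ _) hdnn

lemma periodic_deriv' {f : ℝ → ℝ} (c : ℝ) (hp : Function.Periodic f c) :
    Function.Periodic (deriv f) c := by
  intro x
  have h1 : (fun y => f (y + c)) = f := funext hp
  calc deriv f (x + c) = deriv (fun y => f (y + c)) x := (deriv_comp_add_const f c x).symm
  _ = deriv f x := by rw [h1]

/-- uniqueness of the odd zero-up ground state for each `κ ∈ (0,1)`. -/
theorem ground_state_unique (κ : ℝ) (hκ : 0 < κ) (hκ1 : κ < 1)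
    (U₁ U₂ : ℝ → ℝ) (hU₁ : IsOddZeroUpGroundState κ U₁)
    (hU₂ : IsOddZeroUpGroundState κ U₂) :
    ∀ x : ℝ, U₁ x = U₂ x := by
  have g1 := gs_basic κ hκ U₁ hU₁
  have g2 := gs_basic κ hκ U₂ hU₂
  have hper₁ := hU₁.2.1
  have hper₂ := hU₂.2.1
  have hπ2 : (0:ℝ) ≤ π / 2 := by positivity
  -- the two energies are equal
  have hEeq : FF (U₁ (π/2)) = FF (U₂ (π/2)) := by
    rcases lt_trichotomy (FF (U₁ (π/2))) (FF (U₂ (π/2))) with h | h | h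
    · exact absurd (gs_no_lt κ hκ U₁ U₂ hU₁ hU₂ h) not_false
    · exact h
    · exact absurd (gs_no_lt κ hκ U₂ U₁ hU₂ hU₁ h) not_false
  -- equal initial derivatives
  have hd0 : deriv U₁ 0 = deriv U₂ 0 := by
    have q1 := g1.dsqrt 0 ⟨le_rfl, hπ2⟩
    have q2 := g2.dsqrt 0 ⟨le_rfl, hπ2⟩
    rw [g1.u0, hEeq] at q1
    rw [g2.u0] at q2
    exact mul_left_cancel₀ (ne_of_gt hκ) (q1.trans q2.symm)
  -- uniform bounds
  obtain ⟨R₁, hR₁⟩ := periodic_abs_bound g1.d1.continuous hper₁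
  obtain ⟨R₂, hR₂⟩ := periodic_abs_bound g2.d1.continuous hper₂
  obtain ⟨R₃, hR₃⟩ := periodic_abs_bound g1.d2.continuous (periodic_deriv' _ hper₁)
  obtain ⟨R₄, hR₄⟩ := periodic_abs_bound g2.d2.continuous (periodic_deriv' _ hper₂)
  set R : ℝ := max (max R₁ R₂) (max R₃ R₄) with hRdef
  have hRnn : 0 ≤ R :=
    le_trans (abs_nonneg (U₁ 0)) (le_trans (hR₁ 0) (le_trans (le_max_left _ _) (le_max_left _ _)))
  set v : ℝ × ℝ → ℝ × ℝ := fun p => ((p.2 : ℝ), (p.1 ^ 3 - p.1) / κ ^ 2) with hv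
  set γ₁ : ℝ → ℝ × ℝ := fun t => (U₁ t, deriv U₁ t) with hγ₁
  set γ₂ : ℝ → ℝ × ℝ := fun t => (U₂ t, deriv U₂ t) with hγ₂
  have hγ₁d : ∀ t, HasDerivAt γ₁ (v (γ₁ t)) t := by
    intro t
    have h2 : HasDerivAt (deriv U₁) ((U₁ t ^ 3 - U₁ t) / κ ^ 2) t := by
      have := (g1.d2 t).hasDerivAt
      rwa [g1.dd t] at this
    exact (g1.d1 t).hasDerivAt.prodMk h2
  have hγ₂d : ∀ t, HasDerivAt γ₂ (v (γ₂ t)) t := by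
    intro t
    have h2 : HasDerivAt (deriv U₂) ((U₂ t ^ 3 - U₂ t) / κ ^ 2) t := by
      have := (g2.d2 t).hasDerivAt
      rwa [g2.dd t] at this
    exact (g2.d1 t).hasDerivAt.prodMk h2
  have hmem₁ : ∀ t, γ₁ t ∈ Metric.closedBall (0 : ℝ × ℝ) R := by
    intro t
    rw [mem_closedBall_zero_iff, Prod.norm_def]
    apply max_le
    · exact le_trans (hR₁ t) (le_trans (le_max_left _ _) (le_max_left _ _))
    · exact le_trans (hR₃ t) (le_trans (le_max_left _ _) (le_max_right _ _))
  have hmem₂ : ∀ t, γ₂ t ∈ Metric.closedBall (0 : ℝ × ℝ) R := by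
    intro t
    rw [mem_closedBall_zero_iff, Prod.norm_def]
    apply max_le
    · exact le_trans (hR₂ t) (le_trans (le_max_right _ _) (le_max_left _ _))
    · exact le_trans (hR₄ t) (le_trans (le_max_right _ _) (le_max_right _ _))
  have heq0 : γ₁ 0 = γ₂ 0 := by
    simp only [hγ₁, hγ₂]
    exact Prod.ext (by rw [g1.u0, g2.u0]) hd0
  intro x
  have hb1 : (1:ℝ) ≤ |x| + 1 := by linarith [abs_nonneg x]
  have h0mem : (0:ℝ) ∈ Ioo (-(|x|+1)) (|x|+1) := by
    constructor <;> [linarith [abs_nonneg x]; linarith [abs_nonneg x]]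
  have hEq := ODE_solution_unique_of_mem_Icc
    (v := fun _ : ℝ => v) (s := fun _ : ℝ => Metric.closedBall (0 : ℝ × ℝ) R)
    (fun _ _ => vfield_lip κ R hκ hRnn) h0mem
    ((g1.d1.continuous.prodMk g1.d2.continuous).continuousOn)
    (fun t _ => hγ₁d t) (fun t _ => hmem₁ t)
    ((g2.d1.continuous.prodMk g2.d2.continuous).continuousOn)
    (fun t _ => hγ₂d t) (fun t _ => hmem₂ t) heq0
  have hx : x ∈ Icc (-(|x|+1)) (|x|+1) :=
    ⟨by linarith [neg_abs_le x], by linarith [le_abs_self x]⟩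
  have := hEq hx
  exact congrArg Prod.fst this
end
end

section
/- Let κ ∈ (0,1), let U be an odd zero-up ground state for parameter κ, and set N := U(π/2). Then the energy satisfies E(U) = ∫_{−π}^{π} ( (1/2)(U(x)² − 1)² − (1/4)(N² − 1)² ) dx. -/
open Real MeasureTheory Set

noncomputable section

/-- the ground state energy can be rewritten as
`E(U) = ∫_{−π}^{π} ( ½(U²−1)² − ¼(N²−1)² ) dx` with `N = U(π/2)`. -/
theorem ground_state_energy_formula (κ : ℝ) (hκ : 0 < κ) (hκ1 : κ < 1)
    (U : ℝ → ℝ) (hU : IsOddZeroUpGroundState κ U) :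
    energy κ U
      = ∫ x in (-π)..π,
          (1 / 2 * ((U x) ^ 2 - 1) ^ 2 - 1 / 4 * ((U (π / 2)) ^ 2 - 1) ^ 2) := by
  obtain ⟨hC2, hper, hodd, hODE, hpos, hneg⟩ := hU
  have hUdiff : Differentiable ℝ U := hC2.differentiable (by norm_num)
  have hC1 : ContDiff ℝ 1 (deriv U) := by
    have := (contDiff_succ_iff_deriv (n := 1)).mp (by exact_mod_cast hC2)
    exact this.2.2
  have hU'diff : Differentiable ℝ (deriv U) := hC1.differentiable (by norm_num)
  have hU'cont : Continuous (deriv U) := hU'diff.continuous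
  -- deriv U (π/2) = 0
  have hmid : deriv U (π / 2) = 0 := by
    have hπ : (0 : ℝ) < π / 2 := by positivity
    have hle : deriv U (π / 2) ≤ 0 := by
      have htend : Filter.Tendsto (deriv U) (nhdsWithin (π/2) (Set.Ioi (π/2)))
          (nhds (deriv U (π / 2))) :=
        (hU'cont.continuousAt).continuousWithinAt.tendsto
      refine le_of_tendsto htend ?_
      filter_upwards [Ioo_mem_nhdsGT_of_mem (show π/2 ∈ Ico (π/2) π from ⟨le_refl _, by linarith [Real.pi_pos]⟩)] with x hx
      exact le_of_lt (hneg x ⟨hx.1, le_of_lt hx.2⟩)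
    have hge : 0 ≤ deriv U (π / 2) := by
      have htend : Filter.Tendsto (deriv U) (nhdsWithin (π/2) (Set.Iio (π/2)))
          (nhds (deriv U (π / 2))) :=
        (hU'cont.continuousAt).continuousWithinAt.tendsto
      refine ge_of_tendsto htend ?_
      filter_upwards [Ioo_mem_nhdsLT_of_mem (show π/2 ∈ Ioc 0 (π/2) from ⟨hπ, le_refl _⟩)] with x hx
      exact le_of_lt (hpos x ⟨le_of_lt hx.1, hx.2⟩)
    linarith
  -- first integral F is constant
  set F : ℝ → ℝ := fun x => κ ^ 2 / 2 * (deriv U x) ^ 2 + (U x) ^ 2 / 2 - (U x) ^ 4 / 4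
    with hF
  have hFderiv : ∀ x : ℝ, HasDerivAt F 0 x := by
    intro x
    have h1 : HasDerivAt U (deriv U x) x := (hUdiff x).hasDerivAt
    have h2 : HasDerivAt (deriv U) (deriv (deriv U) x) x := (hU'diff x).hasDerivAt
    have : HasDerivAt F
        (κ ^ 2 / 2 * (2 * deriv U x ^ 1 * deriv (deriv U) x)
          + (2 * U x ^ 1 * deriv U x) / 2 - (4 * U x ^ 3 * deriv U x) / 4) x := by
      exact (((h2.pow 2).const_mul _).add ((h1.pow 2).div_const 2)).sub
        ((h1.pow 4).div_const 4)
    convert this using 1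
    have hode := hODE x
    linear_combination (-(deriv U x)) * hode
  have hFconst : ∀ x : ℝ, F x = F (π / 2) := by
    intro x
    have : ∀ y : ℝ, deriv F y = 0 := fun y => (hFderiv y).deriv
    exact is_const_of_deriv_eq_zero (fun y => (hFderiv y).differentiableAt) this x (π / 2)
  -- pointwise identity
  have key : ∀ x : ℝ,
      κ ^ 2 / 2 * (deriv U x) ^ 2 + (1 - U x ^ 2) ^ 2 / 4
        = 1 / 2 * ((U x) ^ 2 - 1) ^ 2 - 1 / 4 * ((U (π / 2)) ^ 2 - 1) ^ 2 := by
    intro x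
    have h := hFconst x
    simp only [hF, hmid] at h
    nlinarith [h]
  unfold energy
  exact intervalIntegral.integral_congr (fun x _ => key x)
end
end

section
/- Let 0 < κ₁ < κ₂ < 1, and let U_{κ₁} and U_{κ₂} be odd zero-up ground states for parameters κ₁ and κ₂ respectively. Then U_{κ₁}(x) > U_{κ₂}(x) for every x ∈ (0, π/2]. -/
open Real MeasureTheory Set Filter Topology

noncomputable section

section AuxLemmas

variable {κ : ℝ} {U : ℝ → ℝ}

lemma gs_zero (h : IsOddZeroUpGroundState κ U) : U 0 = 0 := by
  have := h.2.2.1 0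
  simp at this
  linarith

lemma gs_cont (h : IsOddZeroUpGroundState κ U) : Continuous U := h.1.continuous

lemma gs_diff (h : IsOddZeroUpGroundState κ U) : Differentiable ℝ U :=
  h.1.differentiable (by norm_num)

lemma gs_contDiff_deriv (h : IsOddZeroUpGroundState κ U) : ContDiff ℝ 1 (deriv U) := by
  have h2 : ContDiff ℝ ((1:WithTop ℕ∞) + 1) U := by
    rw [show ((1:WithTop ℕ∞) + 1) = 2 by norm_num]
    exact h.1
  exact (contDiff_succ_iff_deriv.mp h2).2.2

lemma gs_deriv_cont (h : IsOddZeroUpGroundState κ U) : Continuous (deriv U) :=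
  (gs_contDiff_deriv h).continuous

lemma gs_diff_deriv (h : IsOddZeroUpGroundState κ U) : Differentiable ℝ (deriv U) :=
  (gs_contDiff_deriv h).differentiable one_ne_zero

lemma gs_deriv2_cont (h : IsOddZeroUpGroundState κ U) : Continuous (deriv (deriv U)) :=
  (gs_contDiff_deriv h).continuous_deriv le_rfl

lemma gs_hd (h : IsOddZeroUpGroundState κ U) (x : ℝ) : HasDerivAt U (deriv U x) x :=
  (gs_diff h x).hasDerivAt

lemma gs_hd2 (h : IsOddZeroUpGroundState κ U) (x : ℝ) :
    HasDerivAt (deriv U) (deriv (deriv U) x) x :=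
  (gs_diff_deriv h x).hasDerivAt

lemma gs_deriv_pi2 (h : IsOddZeroUpGroundState κ U) : deriv U (π / 2) = 0 := by
  have hc : Tendsto (deriv U) (nhdsWithin (π/2) (Iio (π/2))) (nhds (deriv U (π/2))) :=
    ((gs_deriv_cont h).continuousAt).continuousWithinAt
  have hc' : Tendsto (deriv U) (nhdsWithin (π/2) (Ioi (π/2))) (nhds (deriv U (π/2))) :=
    ((gs_deriv_cont h).continuousAt).continuousWithinAt
  have hπ := pi_pos
  have h1 : 0 ≤ deriv U (π/2) := by
    refine ge_of_tendsto hc ?_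
    filter_upwards [Ioo_mem_nhdsLT_of_mem (show π/2 ∈ Ioc 0 (π/2) by constructor <;> linarith)]
      with x hx
    exact le_of_lt (h.2.2.2.2.1 x ⟨le_of_lt hx.1, hx.2⟩)
  have h2 : deriv U (π/2) ≤ 0 := by
    refine le_of_tendsto hc' ?_
    filter_upwards [Ioo_mem_nhdsGT_of_mem (show π/2 ∈ Ico (π/2) π by constructor <;> linarith)]
      with x hx
    exact le_of_lt (h.2.2.2.2.2 x ⟨hx.1, le_of_lt hx.2⟩)
  linarith

lemma gs_strictMono (h : IsOddZeroUpGroundState κ U) : StrictMonoOn U (Icc 0 (π/2)) := by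
  apply strictMonoOn_of_deriv_pos (convex_Icc _ _) (gs_cont h).continuousOn
  intro x hx
  rw [interior_Icc] at hx
  exact h.2.2.2.2.1 x ⟨le_of_lt hx.1, hx.2⟩

lemma gs_nonneg (h : IsOddZeroUpGroundState κ U) {x : ℝ} (hx : x ∈ Icc 0 (π/2)) : 0 ≤ U x := by
  rcases eq_or_lt_of_le hx.1 with h0 | h0
  · rw [← h0, gs_zero h]
  · rw [← gs_zero h]
    exact le_of_lt ((gs_strictMono h) ⟨le_rfl, by linarith [hx.2, hx.1]⟩ hx h0)

lemma gs_pos (h : IsOddZeroUpGroundState κ U) {x : ℝ} (hx : x ∈ Ioc 0 (π/2)) : 0 < U x := by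
  rw [← gs_zero h]
  exact (gs_strictMono h) ⟨le_rfl, by linarith [hx.2, hx.1]⟩ ⟨le_of_lt hx.1, hx.2⟩ hx.1

lemma gs_deriv_nonneg (h : IsOddZeroUpGroundState κ U) {x : ℝ} (hx : x ∈ Icc 0 (π/2)) :
    0 ≤ deriv U x := by
  rcases eq_or_lt_of_le hx.2 with h0 | h0
  · rw [h0, gs_deriv_pi2 h]
  · exact le_of_lt (h.2.2.2.2.1 x ⟨hx.1, h0⟩)

lemma gs_energy (h : IsOddZeroUpGroundState κ U) (x : ℝ) :
    κ^2 * (deriv U x)^2 / 2 + (U x)^2 / 2 - (U x)^4 / 4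
      = (U (π/2))^2 / 2 - (U (π/2))^4 / 4 := by
  set E : ℝ → ℝ := fun y => κ^2 * (deriv U y)^2 / 2 + (U y)^2 / 2 - (U y)^4 / 4 with hE
  have hder : ∀ y, HasDerivAt E 0 y := by
    intro y
    have h1 := gs_hd h y
    have h2 := gs_hd2 h y
    have e1 := ((h2.pow 2).const_mul (κ^2)).div_const 2
    have e2 := (h1.pow 2).div_const 2
    have e3 := (h1.pow 4).div_const 4
    have hsum := (e1.add e2).sub e3
    have hODE := h.2.2.2.1 y
    refine hsum.congr_deriv ?_; symm
    push_cast
    linear_combination (-(deriv U y)) * hODE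
  have hconst : ∀ a b : ℝ, E a = E b := fun a b =>
    is_const_of_deriv_eq_zero (fun y => (hder y).differentiableAt)
      (fun y => (hder y).deriv) a b
  have h2 := hconst x (π/2)
  simp only [hE, gs_deriv_pi2 h] at h2
  rw [h2]; ring

lemma gs_max_le_one (hκ : 0 < κ) (h : IsOddZeroUpGroundState κ U) : U (π/2) ≤ 1 := by
  by_contra hM
  push_neg at hM
  set M := U (π/2) with hMdef
  have h0 : U 0 = 0 := gs_zero h
  have hmem : (1:ℝ) ∈ Icc (U 0) (U (π/2)) := by
    rw [h0]; exact ⟨zero_le_one, le_of_lt hM⟩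
  obtain ⟨x₁, hx₁, hUx₁⟩ :=
    intermediate_value_Icc (by positivity : (0:ℝ) ≤ π/2) (gs_cont h).continuousOn hmem
  have hE := gs_energy h x₁
  rw [hUx₁] at hE
  nlinarith [sq_nonneg (deriv U x₁ * κ), sq_nonneg (M^2 - 1), sq_nonneg (M - 1),
    mul_pos (sub_pos.mpr hM) (sub_pos.mpr hM)]

lemma gs_max_lt_one (hκ : 0 < κ) (h : IsOddZeroUpGroundState κ U) : U (π/2) < 1 := by
  rcases lt_or_eq_of_le (gs_max_le_one hκ h) with h1 | h1
  · exact h1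
  exfalso
  have hs2 : (0:ℝ) < Real.sqrt 2 * κ := by positivity
  have hUle : ∀ x ∈ Icc (0:ℝ) (π/2), U x ≤ 1 := by
    intro x hx
    rcases eq_or_lt_of_le hx.2 with he | he
    · rw [he, h1]
    · rw [← h1]
      exact le_of_lt ((gs_strictMono h) hx ⟨by positivity, le_rfl⟩ he)
  have hderiv : ∀ x ∈ Icc (0:ℝ) (π/2),
      deriv U x = (1 - (U x)^2) / (Real.sqrt 2 * κ) := by
    intro x hx
    have hE := gs_energy h x
    rw [h1] at hE
    have hsq2 : (Real.sqrt 2)^2 = 2 := Real.sq_sqrt (by norm_num)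
    have hk2 : κ^2 * (deriv U x)^2 = (1 - (U x)^2)^2 / 2 := by nlinarith
    have h1x : 0 ≤ 1 - (U x)^2 := by
      have := hUle x hx
      have := gs_nonneg h hx
      nlinarith
    have hd := gs_deriv_nonneg h hx
    set a := deriv U x * (Real.sqrt 2 * κ) with ha
    have hanneg : 0 ≤ a := mul_nonneg hd (le_of_lt hs2)
    have hab : a^2 = (1 - (U x)^2)^2 := by
      rw [ha]
      nlinarith [hsq2]
    have haeq : a = 1 - (U x)^2 := by
      calc a = Real.sqrt (a^2) := (Real.sqrt_sq hanneg).symm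
        _ = Real.sqrt ((1 - (U x)^2)^2) := by rw [hab]
        _ = 1 - (U x)^2 := Real.sqrt_sq h1x
    rw [eq_div_iff (ne_of_gt hs2)]
    exact haeq
  set c : ℝ := 2 / (Real.sqrt 2 * κ) with hc
  have hcpos : 0 < c := by positivity
  set g : ℝ → ℝ := fun x => (1 - U x) * Real.exp (c * x) with hg
  have hgd : ∀ x : ℝ, HasDerivAt g ((-(deriv U x)) * Real.exp (c * x)
      + (1 - U x) * (Real.exp (c * x) * c)) x := by
    intro x
    have he : HasDerivAt (fun y => Real.exp (c * y)) (Real.exp (c * x) * c) x := by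
      simpa using (((hasDerivAt_id x).const_mul c).exp)
    exact ((gs_hd h x).const_sub 1).mul he
  have hmono : MonotoneOn g (Icc 0 (π/2)) := by
    apply monotoneOn_of_deriv_nonneg (convex_Icc _ _)
    · exact fun x _ => ((hgd x).continuousAt).continuousWithinAt
    · intro x hx
      exact (hgd x).differentiableAt.differentiableWithinAt
    · intro x hx
      rw [interior_Icc] at hx
      have hxI : x ∈ Icc (0:ℝ) (π/2) := ⟨le_of_lt hx.1, le_of_lt hx.2⟩
      rw [(hgd x).deriv, hderiv x hxI]
      have hU0 : 0 ≤ U x := gs_nonneg h hxI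
      have hU1 : U x ≤ 1 := hUle x hxI
      have hexp : 0 < Real.exp (c * x) := Real.exp_pos _
      have hnum : 1 - (U x)^2 ≤ (1 - U x) * 2 := by nlinarith
      have key : (1 - (U x)^2) / (Real.sqrt 2 * κ) ≤ (1 - U x) * c := by
        have h2 : (1 - U x) * c = ((1 - U x) * 2) / (Real.sqrt 2 * κ) := by
          rw [hc]; ring
        rw [h2]
        gcongr
      nlinarith [mul_nonneg (le_of_lt hexp) (sub_nonneg.mpr key)]
  have hg0 : g 0 = 1 := by simp [hg, gs_zero h]
  have hglast : g (π/2) = 0 := by simp [hg, ← h1]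
  have := hmono (show (0:ℝ) ∈ Icc (0:ℝ) (π/2) from ⟨le_rfl, by positivity⟩)
    (show π/2 ∈ Icc (0:ℝ) (π/2) from ⟨by positivity, le_rfl⟩) (by positivity)
  rw [hg0, hglast] at this
  linarith


lemma deriv_nonneg_right_of_nonneg {f : ℝ → ℝ} {a b : ℝ} (hab : a < b)
    (hf : DifferentiableAt ℝ f a) (h0 : f a = 0) (hnn : ∀ x ∈ Ioc a b, 0 ≤ f x) :
    0 ≤ deriv f a := by
  have h := (hf.hasDerivAt.hasDerivWithinAt (s := Ioi a))
  rw [hasDerivWithinAt_iff_tendsto_slope] at h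
  rw [Set.diff_singleton_eq_self (notMem_Ioi.mpr le_rfl)] at h
  refine ge_of_tendsto h ?_
  filter_upwards [Ioo_mem_nhdsGT_of_mem (show a ∈ Ico a b from ⟨le_rfl, hab⟩)] with x hx
  rw [slope_def_field, h0, sub_zero]
  exact div_nonneg (hnn x ⟨hx.1, le_of_lt hx.2⟩) (by linarith [hx.1])

lemma deriv_nonpos_left_of_nonneg {f : ℝ → ℝ} {a b : ℝ} (hab : a < b)
    (hf : DifferentiableAt ℝ f b) (h0 : f b = 0) (hnn : ∀ x ∈ Ico a b, 0 ≤ f x) :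
    deriv f b ≤ 0 := by
  have h := (hf.hasDerivAt.hasDerivWithinAt (s := Iio b))
  rw [hasDerivWithinAt_iff_tendsto_slope] at h
  rw [Set.diff_singleton_eq_self (notMem_Iio.mpr le_rfl)] at h
  refine le_of_tendsto h ?_
  filter_upwards [Ioo_mem_nhdsLT_of_mem (show b ∈ Ioc a b from ⟨hab, le_rfl⟩)] with x hx
  rw [slope_def_field, h0, sub_zero]
  apply div_nonpos_of_nonneg_of_nonpos (hnn x ⟨le_of_lt hx.1, hx.2⟩)
  linarith [hx.2]

variable {κ₁ κ₂ : ℝ} {U₁ U₂ : ℝ → ℝ}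

lemma wronskian_hasDeriv (h1 : IsOddZeroUpGroundState κ₁ U₁)
    (h2 : IsOddZeroUpGroundState κ₂ U₂) (hκ1 : κ₁ ≠ 0) (hκ2 : κ₂ ≠ 0) (x : ℝ) :
    HasDerivAt (fun y => deriv U₁ y * U₂ y - deriv U₂ y * U₁ y)
      ((U₁ x ^ 3 - U₁ x) * U₂ x / κ₁ ^ 2 - (U₂ x ^ 3 - U₂ x) * U₁ x / κ₂ ^ 2) x := by
  have hh := ((gs_hd2 h1 x).mul (gs_hd h2 x)).sub ((gs_hd2 h2 x).mul (gs_hd h1 x))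
  refine hh.congr_deriv ?_
  have o1 := h1.2.2.2.1 x
  have o2 := h2.2.2.2.1 x
  have e1 : deriv (deriv U₁) x = (U₁ x ^ 3 - U₁ x) / κ₁ ^ 2 := by
    field_simp
    linarith [o1]
  have e2 : deriv (deriv U₂) x = (U₂ x ^ 3 - U₂ x) / κ₂ ^ 2 := by
    field_simp
    linarith [o2]
  rw [e1, e2]
  ring

lemma wronskian_strictAnti (h1 : IsOddZeroUpGroundState κ₁ U₁)
    (h2 : IsOddZeroUpGroundState κ₂ U₂) (hκ1 : 0 < κ₁) (hκ12 : κ₁ < κ₂)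
    {a b : ℝ} (ha : 0 ≤ a) (hab : a < b) (hb : b ≤ π / 2)
    (hD : ∀ x ∈ Icc a b, U₁ x ≤ U₂ x) :
    StrictAntiOn (fun y => deriv U₁ y * U₂ y - deriv U₂ y * U₁ y) (Icc a b) := by
  have hκ2 : 0 < κ₂ := lt_trans hκ1 hκ12
  apply strictAntiOn_of_deriv_neg (convex_Icc a b)
  · exact (((gs_deriv_cont h1).mul (gs_cont h2)).sub
      ((gs_deriv_cont h2).mul (gs_cont h1))).continuousOn
  · intro x hx
    rw [interior_Icc] at hx
    rw [(wronskian_hasDeriv h1 h2 (ne_of_gt hκ1) (ne_of_gt hκ2) x).deriv]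
    set u := U₁ x with hu
    set v := U₂ x with hv
    have hxmem : x ∈ Ioc (0:ℝ) (π/2) := ⟨lt_of_le_of_lt ha hx.1, le_of_lt (lt_of_lt_of_le hx.2 hb)⟩
    have hu0 : 0 < u := gs_pos h1 hxmem
    have huv : u ≤ v := hD x ⟨le_of_lt hx.1, le_of_lt hx.2⟩
    have hv0 : 0 < v := lt_of_lt_of_le hu0 huv
    have hu1 : u < 1 := by
      have hmax := gs_max_lt_one hκ1 h1
      have : u < U₁ (π/2) := (gs_strictMono h1)
        ⟨le_of_lt hxmem.1, hxmem.2⟩ ⟨by positivity, le_rfl⟩ (lt_of_lt_of_le hx.2 hb)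
      linarith
    have hk1 : (0:ℝ) < κ₁ ^ 2 := by positivity
    have hk2 : (0:ℝ) < κ₂ ^ 2 := by positivity
    have hklt : κ₁ ^ 2 < κ₂ ^ 2 := by nlinarith
    have hform : (u ^ 3 - u) * v / κ₁ ^ 2 - (v ^ 3 - v) * u / κ₂ ^ 2
        = (u * v * ((u ^ 2 - 1) * κ₂ ^ 2 - (v ^ 2 - 1) * κ₁ ^ 2)) / (κ₁ ^ 2 * κ₂ ^ 2) := by
      field_simp
    rw [hform]
    apply div_neg_of_neg_of_pos _ (by positivity)
    have hu2 : u ^ 2 < 1 := by nlinarith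
    have hb1 : (u ^ 2 - 1) * κ₂ ^ 2 < (u ^ 2 - 1) * κ₁ ^ 2 :=
      mul_lt_mul_of_neg_left hklt (by linarith)
    have hu2v2 : u ^ 2 ≤ v ^ 2 := by nlinarith
    have hb2 : (u ^ 2 - 1) * κ₁ ^ 2 ≤ (v ^ 2 - 1) * κ₁ ^ 2 :=
      mul_le_mul_of_nonneg_right (by linarith) (le_of_lt hk1)
    have : (u ^ 2 - 1) * κ₂ ^ 2 - (v ^ 2 - 1) * κ₁ ^ 2 < 0 := by linarith
    exact mul_neg_of_pos_of_neg (mul_pos hu0 hv0) this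


lemma no_cross (h1 : IsOddZeroUpGroundState κ₁ U₁) (h2 : IsOddZeroUpGroundState κ₂ U₂)
    (hκ1 : 0 < κ₁) (hκ12 : κ₁ < κ₂) {a b : ℝ} (ha : 0 ≤ a) (hab : a < b) (hb : b ≤ π / 2)
    (hDa : U₂ a = U₁ a) (hDnn : ∀ x ∈ Icc a b, U₁ x ≤ U₂ x)
    (hWb : 0 ≤ deriv U₁ b * U₂ b - deriv U₂ b * U₁ b) : False := by
  set W := fun y => deriv U₁ y * U₂ y - deriv U₂ y * U₁ y with hW
  have hanti := wronskian_strictAnti h1 h2 hκ1 hκ12 ha hab hb hDnn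
  have hWab : W b < W a := hanti ⟨le_rfl, le_of_lt hab⟩ ⟨le_of_lt hab, le_rfl⟩ hab
  have hDdiff : DifferentiableAt ℝ (fun x => U₂ x - U₁ x) a :=
    (gs_diff h2 a).sub (gs_diff h1 a)
  have hDa' : 0 ≤ deriv (fun x => U₂ x - U₁ x) a := by
    apply deriv_nonneg_right_of_nonneg hab hDdiff (by simp [hDa])
    intro x hx
    exact sub_nonneg.mpr (hDnn x ⟨le_of_lt hx.1, hx.2⟩)
  have hderivD : deriv (fun x => U₂ x - U₁ x) a = deriv U₂ a - deriv U₁ a :=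
    deriv_sub (gs_diff h2 a) (gs_diff h1 a)
  have hUa : 0 ≤ U₁ a := gs_nonneg h1 ⟨ha, by linarith⟩
  have hWa : W a ≤ 0 := by
    have he : W a = U₁ a * (deriv U₁ a - deriv U₂ a) := by
      simp only [hW]
      rw [hDa]; ring
    rw [he]
    apply mul_nonpos_of_nonneg_of_nonpos hUa
    rw [hderivD] at hDa'
    linarith
  have hWb' : 0 ≤ W b := hWb
  linarith

lemma no_pos_point (h1 : IsOddZeroUpGroundState κ₁ U₁) (h2 : IsOddZeroUpGroundState κ₂ U₂)
    (hκ1 : 0 < κ₁) (hκ12 : κ₁ < κ₂) {x₀ : ℝ} (hx₀ : x₀ ∈ Ioc (0:ℝ) (π/2))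
    (hpos : U₁ x₀ < U₂ x₀) : False := by
  set D := fun x => U₂ x - U₁ x with hD
  have hDcont : Continuous D := (gs_cont h2).sub (gs_cont h1)
  set A := Icc (0:ℝ) x₀ ∩ {x | D x ≤ 0} with hA
  have hAclosed : IsClosed A := isClosed_Icc.inter (isClosed_le hDcont continuous_const)
  have hA0 : (0:ℝ) ∈ A := ⟨⟨le_rfl, le_of_lt hx₀.1⟩, by simp [hD, gs_zero h1, gs_zero h2]⟩
  have hAbdd : BddAbove A := bddAbove_Icc.mono inter_subset_left
  set a := sSup A with haDef
  have haA : a ∈ A := hAclosed.csSup_mem ⟨0, hA0⟩ hAbdd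
  have ha0 : 0 ≤ a := haA.1.1
  have hax : a ≤ x₀ := haA.1.2
  have hDpos : ∀ x ∈ Ioc a x₀, 0 < D x := by
    intro x hx
    by_contra hle
    push_neg at hle
    have hxA : x ∈ A := ⟨⟨le_trans ha0 (le_of_lt hx.1), hx.2⟩, hle⟩
    exact absurd (le_csSup hAbdd hxA) (not_le.mpr hx.1)
  have hane : a ≠ x₀ := by
    intro he
    have h2' := haA.2
    rw [he] at h2'
    simp only [hD, mem_setOf_eq] at h2'
    linarith
  have halt : a < x₀ := lt_of_le_of_ne hax hane
  have hDa : D a = 0 := by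
    refine le_antisymm haA.2 ?_
    have hta : Filter.Tendsto D (nhdsWithin a (Ioi a)) (nhds (D a)) :=
      hDcont.continuousAt.continuousWithinAt
    refine ge_of_tendsto hta ?_
    filter_upwards [Ioo_mem_nhdsGT_of_mem (show a ∈ Ico a x₀ from ⟨le_rfl, halt⟩)] with x hx
    exact le_of_lt (hDpos x ⟨hx.1, le_of_lt hx.2⟩)
  have hDa' : U₂ a = U₁ a := by
    have := hDa
    simp only [hD] at this
    linarith
  by_cases hB : (Icc x₀ (π/2) ∩ {x | D x ≤ 0}).Nonempty
  · set B := Icc x₀ (π/2) ∩ {x | D x ≤ 0} with hBdef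
    have hBclosed : IsClosed B := isClosed_Icc.inter (isClosed_le hDcont continuous_const)
    have hBbdd : BddBelow B := bddBelow_Icc.mono inter_subset_left
    set b := sInf B with hbDef
    have hbB : b ∈ B := hBclosed.csInf_mem hB hBbdd
    have hbx : x₀ ≤ b := hbB.1.1
    have hb2 : b ≤ π/2 := hbB.1.2
    have hDposb : ∀ x ∈ Ico x₀ b, 0 < D x := by
      intro x hx
      by_contra hle
      push_neg at hle
      have hxB : x ∈ B := ⟨⟨hx.1, le_trans (le_of_lt hx.2) hb2⟩, hle⟩
      exact absurd (csInf_le hBbdd hxB) (not_le.mpr hx.2)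
    have hbne : x₀ ≠ b := by
      intro he
      have h2' := hbB.2
      rw [← he] at h2'
      simp only [hD, mem_setOf_eq] at h2'
      linarith
    have hblt : x₀ < b := lt_of_le_of_ne hbx hbne
    have hDb : D b = 0 := by
      refine le_antisymm hbB.2 ?_
      have htb : Filter.Tendsto D (nhdsWithin b (Iio b)) (nhds (D b)) :=
        hDcont.continuousAt.continuousWithinAt
      refine ge_of_tendsto htb ?_
      filter_upwards [Ioo_mem_nhdsLT_of_mem (show b ∈ Ioc x₀ b from ⟨hblt, le_rfl⟩)] with x hx
      exact le_of_lt (hDposb x ⟨le_of_lt hx.1, hx.2⟩)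
    have hDnn : ∀ x ∈ Icc a b, U₁ x ≤ U₂ x := by
      intro x hx
      rw [← sub_nonneg]
      rcases le_or_gt x x₀ with hcase | hcase
      · rcases eq_or_lt_of_le hx.1 with he | he
        · rw [← he]
          exact le_of_eq hDa.symm
        · exact le_of_lt (hDpos x ⟨he, hcase⟩)
      · rcases eq_or_lt_of_le hx.2 with he | he
        · rw [he]
          exact le_of_eq hDb.symm
        · exact le_of_lt (hDposb x ⟨le_of_lt hcase, he⟩)
    -- W b ≥ 0
    have hDdiffb : DifferentiableAt ℝ D b := (gs_diff h2 b).sub (gs_diff h1 b)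
    have hDb' : deriv D b ≤ 0 := by
      apply deriv_nonpos_left_of_nonneg (lt_trans halt hblt) hDdiffb hDb
      intro x hx
      exact sub_nonneg.mpr (hDnn x ⟨hx.1, le_of_lt hx.2⟩)
    have hderivDb : deriv D b = deriv U₂ b - deriv U₁ b :=
      deriv_sub (gs_diff h2 b) (gs_diff h1 b)
    have hUb : 0 ≤ U₁ b := gs_nonneg h1 ⟨le_trans ha0 (le_of_lt (lt_of_lt_of_le halt hbx)), hb2⟩
    have hWb : 0 ≤ deriv U₁ b * U₂ b - deriv U₂ b * U₁ b := by
      have hUeq : U₂ b = U₁ b := by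
        have := hDb
        simp only [hD] at this
        linarith
      have he : deriv U₁ b * U₂ b - deriv U₂ b * U₁ b
          = U₁ b * (deriv U₁ b - deriv U₂ b) := by
        rw [hUeq]; ring
      rw [he]
      apply mul_nonneg hUb
      rw [hderivDb] at hDb'
      linarith
    exact no_cross h1 h2 hκ1 hκ12 ha0 (lt_trans halt hblt) hb2 hDa' hDnn hWb
  · have hallpos : ∀ x ∈ Icc x₀ (π/2), 0 < D x := by
      intro x hx
      by_contra hle
      push_neg at hle
      exact hB ⟨x, hx, hle⟩
    have hDnn : ∀ x ∈ Icc a (π/2), U₁ x ≤ U₂ x := by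
      intro x hx
      rw [← sub_nonneg]
      rcases le_or_gt x x₀ with hcase | hcase
      · rcases eq_or_lt_of_le hx.1 with he | he
        · rw [← he]
          exact le_of_eq hDa.symm
        · exact le_of_lt (hDpos x ⟨he, hcase⟩)
      · exact le_of_lt (hallpos x ⟨le_of_lt hcase, hx.2⟩)
    have hWb : 0 ≤ deriv U₁ (π/2) * U₂ (π/2) - deriv U₂ (π/2) * U₁ (π/2) := by
      rw [gs_deriv_pi2 h1, gs_deriv_pi2 h2]
      simp
    exact no_cross h1 h2 hκ1 hκ12 ha0 (lt_of_lt_of_le halt hx₀.2) le_rfl hDa' hDnn hWb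


lemma touch_point (h1 : IsOddZeroUpGroundState κ₁ U₁) (h2 : IsOddZeroUpGroundState κ₂ U₂)
    (hκ1 : 0 < κ₁) (hκ12 : κ₁ < κ₂)
    (hDle : ∀ y ∈ Ioc (0:ℝ) (π/2), U₂ y ≤ U₁ y)
    {xs : ℝ} (hxs : xs ∈ Ioc (0:ℝ) (π/2)) (heq : U₂ xs = U₁ xs) : False := by
  have hκ2 : 0 < κ₂ := lt_trans hκ1 hκ12
  set D := fun x => U₂ x - U₁ x with hDdef
  have hDcont : Continuous D := (gs_cont h2).sub (gs_cont h1)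
  have hDd : deriv D = fun x => deriv U₂ x - deriv U₁ x :=
    funext fun x => deriv_sub (gs_diff h2 x) (gs_diff h1 x)
  have hDdcont : Continuous (deriv D) := by
    rw [hDd]
    exact (gs_deriv_cont h2).sub (gs_deriv_cont h1)
  have hDdd : deriv (deriv D) = fun x => deriv (deriv U₂) x - deriv (deriv U₁) x := by
    rw [hDd]
    exact funext fun x => deriv_sub (gs_diff_deriv h2 x) (gs_diff_deriv h1 x)
  have hDddcont : Continuous (deriv (deriv D)) := by
    rw [hDdd]
    exact (gs_deriv2_cont h2).sub (gs_deriv2_cont h1)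
  set c := U₁ xs with hc
  have hc0 : 0 < c := gs_pos h1 hxs
  have hc1 : c < 1 := by
    have hle : c ≤ U₁ (π/2) :=
      ((gs_strictMono h1).monotoneOn) ⟨le_of_lt hxs.1, hxs.2⟩ ⟨by positivity, le_rfl⟩ hxs.2
    linarith [gs_max_lt_one hκ1 h1]
  have hDxs : D xs = 0 := by simp [hDdef, heq, hc]
  have hD1xs : deriv D xs = 0 := by
    rcases eq_or_lt_of_le hxs.2 with he | he
    · rw [hDd]
      simp only
      rw [he, gs_deriv_pi2 h1, gs_deriv_pi2 h2]
      ring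
    · have hmax : IsLocalMax D xs := by
        have hnb : Ioo (0:ℝ) (π/2) ∈ nhds xs := isOpen_Ioo.mem_nhds ⟨hxs.1, he⟩
        filter_upwards [hnb] with y hy
        rw [hDxs]
        exact sub_nonpos.mpr (hDle y ⟨hy.1, le_of_lt hy.2⟩)
      exact hmax.deriv_eq_zero
  -- second derivative is positive at xs
  have o1 := h1.2.2.2.1 xs
  have o2 := h2.2.2.2.1 xs
  rw [heq] at o2
  rw [← hc] at o1
  have hk1sq : (0:ℝ) < κ₁^2 := by positivity
  have hk2sq : (0:ℝ) < κ₂^2 := by positivity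
  have hval : deriv (deriv D) xs = ((c^3 - c) * (κ₁^2 - κ₂^2)) / (κ₁^2 * κ₂^2) := by
    rw [hDdd]
    simp only
    have e1 : deriv (deriv U₁) xs = (c^3 - c)/κ₁^2 := by
      field_simp
      linarith [o1]
    have e2 : deriv (deriv U₂) xs = (c^3 - c)/κ₂^2 := by
      field_simp
      linarith [o2]
    rw [e1, e2]
    field_simp
  have hpos2 : 0 < deriv (deriv D) xs := by
    rw [hval]
    apply div_pos _ (by positivity)
    have hn1 : c^3 - c < 0 := by
      nlinarith [mul_pos (mul_pos hc0 (sub_pos.mpr hc1)) (show (0:ℝ) < 1 + c by linarith)]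
    have hn2 : κ₁^2 - κ₂^2 < 0 := by nlinarith
    exact mul_pos_of_neg_of_neg hn1 hn2
  have hev : ∀ᶠ y in nhds xs, 0 < deriv (deriv D) y := by
    have hopen : IsOpen {y : ℝ | 0 < deriv (deriv D) y} :=
      isOpen_lt continuous_const hDddcont
    exact hopen.mem_nhds hpos2
  obtain ⟨ε, hε, hball⟩ := Metric.eventually_nhds_iff.mp hev
  set δ := min (ε/2) (xs/2) with hδdef
  have hδ0 : 0 < δ := lt_min (half_pos hε) (half_pos hxs.1)
  have hδx : δ < xs := lt_of_le_of_lt (min_le_right _ _) (by linarith [hxs.1])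
  have hδε : δ < ε := lt_of_le_of_lt (min_le_left _ _) (by linarith)
  have hkey : ∀ y ∈ Icc (xs - δ) xs, 0 < deriv (deriv D) y := by
    intro y hy
    apply hball
    rw [Real.dist_eq]
    have : |y - xs| ≤ δ := abs_le.mpr ⟨by linarith [hy.1], by linarith [hy.2]⟩
    linarith
  have hmonoD' : StrictMonoOn (deriv D) (Icc (xs - δ) xs) := by
    apply strictMonoOn_of_deriv_pos (convex_Icc _ _) hDdcont.continuousOn
    intro y hy
    rw [interior_Icc] at hy
    exact hkey y ⟨le_of_lt hy.1, le_of_lt hy.2⟩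
  have hD'neg : ∀ y ∈ Ioo (xs - δ) xs, deriv D y < 0 := by
    intro y hy
    have := hmonoD' ⟨le_of_lt hy.1, le_of_lt hy.2⟩ ⟨by linarith [hδ0], le_rfl⟩ hy.2
    rw [hD1xs] at this
    exact this
  have hantiD : StrictAntiOn D (Icc (xs - δ) xs) := by
    apply strictAntiOn_of_deriv_neg (convex_Icc _ _) hDcont.continuousOn
    intro y hy
    rw [interior_Icc] at hy
    exact hD'neg y hy
  have hDy₀ : 0 < D (xs - δ/2) := by
    have := hantiD (show xs - δ/2 ∈ Icc (xs - δ) xs from ⟨by linarith, by linarith⟩)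
      (show xs ∈ Icc (xs - δ) xs from ⟨by linarith, le_rfl⟩) (by linarith)
    rw [hDxs] at this
    exact this
  have hy₀mem : xs - δ/2 ∈ Ioc (0:ℝ) (π/2) := ⟨by linarith, by linarith [hxs.2]⟩
  have := hDle (xs - δ/2) hy₀mem
  simp only [hDdef] at hDy₀
  linarith


end AuxLemmas

/-- pointwise monotonicity of the ground state in `κ`:
if `0 < κ₁ < κ₂ < 1` then `U_{κ₁} > U_{κ₂}` on `(0, π/2]`. -/
theorem ground_state_pointwise_monotone (κ₁ κ₂ : ℝ) (h₁ : 0 < κ₁) (h₁₂ : κ₁ < κ₂)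
    (h₂ : κ₂ < 1) (U₁ U₂ : ℝ → ℝ)
    (hU₁ : IsOddZeroUpGroundState κ₁ U₁) (hU₂ : IsOddZeroUpGroundState κ₂ U₂) :
    ∀ x ∈ Set.Ioc (0 : ℝ) (π / 2), U₂ x < U₁ x := by
  intro x hx
  by_contra hlt
  push_neg at hlt
  by_cases hex : ∃ x₀ ∈ Ioc (0:ℝ) (π/2), U₁ x₀ < U₂ x₀
  · obtain ⟨x₀, hx₀, hp⟩ := hex
    exact (no_pos_point hU₁ hU₂ h₁ h₁₂ hx₀ hp).elim
  · push_neg at hex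
    have heq : U₂ x = U₁ x := le_antisymm (hex x hx) hlt
    exact (touch_point hU₁ hU₂ h₁ h₁₂ hex hx heq).elim
end
end

section
/- For each κ ∈ (0,1) let U_κ be an odd zero-up ground state for parameter κ. Assume there exist constants c > 0 and κ₀ ∈ (0,1) such that for all κ ∈ (0, κ₀) and all x ∈ [0, π/2], 0 ≤ tanh(x/(√2 κ)) − U_κ(x) ≤ exp(−c/κ). Then lim_{κ → 0⁺} E_κ(U_κ)/κ = (4/3)√2, where E_κ denotes the energy functional with diffusion coefficient κ. -/
open Real MeasureTheory Set

noncomputable section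

lemma sqrtAddLe {x y : ℝ} (hx : 0 ≤ x) (hy : 0 ≤ y) :
    Real.sqrt (x + y) ≤ Real.sqrt x + Real.sqrt y := by
  have h1 := Real.sqrt_nonneg x
  have h2 := Real.sqrt_nonneg y
  have h : x + y ≤ (Real.sqrt x + Real.sqrt y) ^ 2 := by
    nlinarith [Real.sq_sqrt hx, Real.sq_sqrt hy, mul_nonneg h1 h2]
  calc Real.sqrt (x + y) ≤ Real.sqrt ((Real.sqrt x + Real.sqrt y) ^ 2) := Real.sqrt_le_sqrt h
    _ = Real.sqrt x + Real.sqrt y := Real.sqrt_sq (by positivity)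

lemma tanhFacts (y : ℝ) :
    Real.tanh y ≤ 1 ∧ 1 - Real.tanh y ≤ 2 * Real.exp (-(2 * y)) := by
  have hc : 0 < Real.cosh y := Real.cosh_pos y
  have hch : Real.exp y / 2 ≤ Real.cosh y := by
    rw [Real.cosh_eq]; nlinarith [Real.exp_pos (-y)]
  have h1 : 1 - Real.tanh y = Real.exp (-y) / Real.cosh y := by
    rw [Real.tanh_eq_sinh_div_cosh, Real.sinh_eq, Real.cosh_eq]
    field_simp
    ring
  constructor
  · nlinarith [Real.exp_pos (-y), h1, div_pos (Real.exp_pos (-y)) hc]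
  · rw [h1]
    have hey : 0 < Real.exp y := Real.exp_pos y
    rw [div_le_iff₀ hc]
    have h2 : Real.exp (-(2*y)) * Real.cosh y ≥ Real.exp (-(2*y)) * (Real.exp y / 2) := by
      apply mul_le_mul_of_nonneg_left hch (Real.exp_pos _).le
    have he : Real.exp (-(2*y)) * (Real.exp y / 2) = Real.exp (-y) / 2 := by
      rw [show Real.exp (-(2*y)) * (Real.exp y / 2) = Real.exp (-(2*y)) * Real.exp y / 2 by ring,
        ← Real.exp_add, show -(2*y) + y = -y by ring]
    nlinarith [Real.exp_pos (-(2*y))]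

lemma integral_est {m : ℝ} (h0 : 0 ≤ m) (h1 : m ≤ 1) :
    (m - m^3/3)/Real.sqrt 2 - (1 - m^2)/Real.sqrt 2
      ≤ (∫ u in (0:ℝ)..m, Real.sqrt ((1 - u^2)^2/2 - (1 - m^2)^2/2)) ∧
    (∫ u in (0:ℝ)..m, Real.sqrt ((1 - u^2)^2/2 - (1 - m^2)^2/2)) ≤ (m - m^3/3)/Real.sqrt 2 := by
  have hs2 : (0:ℝ) < Real.sqrt 2 := by positivity
  have hgc : Continuous fun u : ℝ => Real.sqrt ((1 - u^2)^2/2 - (1 - m^2)^2/2) := by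
    apply Real.continuous_sqrt.comp; continuity
  have hlc : Continuous fun u : ℝ => (1 - u^2)/Real.sqrt 2 - (1 - m^2)/Real.sqrt 2 := by continuity
  have huc : Continuous fun u : ℝ => (1 - u^2)/Real.sqrt 2 := by continuity
  have hpoly : ∫ u in (0:ℝ)..m, (1 - u^2) = m - m^3/3 := by
    have h := intervalIntegral.integral_sub (intervalIntegrable_const (c := (1:ℝ)) (μ := volume))
      (((continuous_pow 2 (M := ℝ))).intervalIntegrable 0 m)
    rw [h]; simp; ring
  have hup : ∫ u in (0:ℝ)..m, (1 - u^2)/Real.sqrt 2 = (m - m^3/3)/Real.sqrt 2 := by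
    rw [intervalIntegral.integral_div, hpoly]
  have hlow : ∫ u in (0:ℝ)..m, ((1 - u^2)/Real.sqrt 2 - (1 - m^2)/Real.sqrt 2)
      = (m - m^3/3)/Real.sqrt 2 - m * ((1 - m^2)/Real.sqrt 2) := by
    rw [intervalIntegral.integral_sub (huc.intervalIntegrable 0 m)
        (intervalIntegrable_const (μ := volume)),
      hup, intervalIntegral.integral_const]
    simp
  have hsq : ∀ u ∈ Icc (0:ℝ) m, Real.sqrt ((1 - u^2)^2/2) = (1 - u^2)/Real.sqrt 2 := by
    intro u hu
    rw [show (1 - u^2)^2/2 = (1 - u^2)^2 / 2 from rfl, Real.sqrt_div (sq_nonneg _),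
      Real.sqrt_sq (by nlinarith [hu.1, hu.2] : (0:ℝ) ≤ 1 - u^2)]
  constructor
  · have hmono := intervalIntegral.integral_mono_on (μ := volume) (a := 0) (b := m) h0
      (hlc.intervalIntegrable 0 m) (hgc.intervalIntegrable 0 m) (fun u hu => by
        have hA : (0:ℝ) ≤ (1 - m^2)^2/2 := by positivity
        have e0 : u^2 ≤ m^2 := by nlinarith [hu.1, hu.2]
        have hB : (1 - m^2)^2/2 ≤ (1 - u^2)^2/2 := by
          nlinarith [mul_nonneg (by nlinarith : (0:ℝ) ≤ (1 - u^2) - (1 - m^2))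
            (by nlinarith : (0:ℝ) ≤ (1 - u^2) + (1 - m^2))]
        have h3 := sqrtAddLe (x := (1 - u^2)^2/2 - (1 - m^2)^2/2) (y := (1 - m^2)^2/2)
          (by linarith) hA
        rw [show (1 - u^2)^2/2 - (1 - m^2)^2/2 + (1 - m^2)^2/2 = (1 - u^2)^2/2 by ring] at h3
        have h4 : Real.sqrt ((1 - m^2)^2/2) = (1 - m^2)/Real.sqrt 2 := by
          rw [Real.sqrt_div (sq_nonneg _), Real.sqrt_sq (by nlinarith : (0:ℝ) ≤ 1 - m^2)]
        rw [hsq u hu, h4] at h3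
        linarith)
    rw [hlow] at hmono
    have : (m - m^3/3)/Real.sqrt 2 - (1 - m^2)/Real.sqrt 2
        ≤ (m - m^3/3)/Real.sqrt 2 - m * ((1 - m^2)/Real.sqrt 2) := by
      have hnn : 0 ≤ (1 - m^2)/Real.sqrt 2 := by
        apply div_nonneg (by nlinarith) hs2.le
      nlinarith
    linarith
  · have hmono := intervalIntegral.integral_mono_on (μ := volume) (a := 0) (b := m) h0
      (hgc.intervalIntegrable 0 m) (huc.intervalIntegrable 0 m) (fun u hu => by
      have : (1 - u^2)^2/2 - (1 - m^2)^2/2 ≤ (1 - u^2)^2/2 := by nlinarith [sq_nonneg (1 - m^2)]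
      calc Real.sqrt ((1 - u^2)^2/2 - (1 - m^2)^2/2) ≤ Real.sqrt ((1 - u^2)^2/2) :=
            Real.sqrt_le_sqrt this
        _ = (1 - u^2)/Real.sqrt 2 := hsq u hu)
    rwa [hup] at hmono
lemma key_energy {κ : ℝ} {U : ℝ → ℝ} (hκ : 0 < κ) (hG : IsOddZeroUpGroundState κ U) :
    energy κ U = 4 * κ * (∫ u in (0:ℝ)..(U (π/2)),
        Real.sqrt ((1 - u^2)^2/2 - (1 - (U (π/2))^2)^2/2))
      + π * (1 - (U (π/2))^2)^2 / 2 := by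
  obtain ⟨hC2, hper, hodd, hode, hpos, hneg⟩ := hG
  have hπ : (0:ℝ) < π := Real.pi_pos
  have hπ2 : (0:ℝ) < π / 2 := by linarith
  set m := U (π/2) with hm
  have h2 : ContDiff ℝ ((1 : WithTop ℕ∞) + 1) U := by
    have : ((1 : WithTop ℕ∞) + 1) = 2 := by norm_num
    rw [this]; exact hC2
  obtain ⟨hd1, -, hcd1⟩ := contDiff_succ_iff_deriv.mp h2
  have hd2 : Differentiable ℝ (deriv U) := hcd1.differentiable one_ne_zero
  have hcderiv : Continuous (deriv U) := hcd1.continuous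
  -- derivative vanishes at π/2
  have hd0 : deriv U (π/2) = 0 := by
    have hc1 : Filter.Tendsto (deriv U) (nhdsWithin (π/2) (Set.Iio (π/2))) (nhds (deriv U (π/2))) :=
      (hcderiv.continuousAt).tendsto.mono_left nhdsWithin_le_nhds
    have hc2 : Filter.Tendsto (deriv U) (nhdsWithin (π/2) (Set.Ioi (π/2))) (nhds (deriv U (π/2))) :=
      (hcderiv.continuousAt).tendsto.mono_left nhdsWithin_le_nhds
    have h1 : 0 ≤ deriv U (π/2) := by
      refine ge_of_tendsto hc1 ?_
      filter_upwards [Ioo_mem_nhdsLT_of_mem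
        (show (π/2 : ℝ) ∈ Set.Ioc (0:ℝ) (π/2) from ⟨hπ2, le_rfl⟩)] with x hx
      exact (hpos x ⟨hx.1.le, hx.2⟩).le
    have h2' : deriv U (π/2) ≤ 0 := by
      refine le_of_tendsto hc2 ?_
      filter_upwards [Ioo_mem_nhdsGT_of_mem
        (show (π/2 : ℝ) ∈ Set.Ico (π/2) π from ⟨le_rfl, by linarith⟩)] with x hx
      exact (hneg x ⟨hx.1, hx.2.le⟩).le
    linarith
  -- first integral
  have hF : ∀ x : ℝ, HasDerivAt
      (fun y => κ^2/2 * (deriv U y)^2 + ((U y)^2/2 - (U y)^4/4)) 0 x := by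
    intro x
    have hU' : HasDerivAt U (deriv U x) x := (hd1 x).hasDerivAt
    have hU'' : HasDerivAt (deriv U) (deriv (deriv U) x) x := (hd2 x).hasDerivAt
    have h := ((hU''.pow 2).const_mul (κ^2/2)).add
      (((hU'.pow 2).div_const 2).sub ((hU'.pow 4).div_const 4))
    apply h.congr_deriv
    have h0 := hode x
    push_cast
    linear_combination (deriv U x) * h0
  have hconst : ∀ x : ℝ, κ^2/2 * (deriv U x)^2 + ((U x)^2/2 - (U x)^4/4)
      = m^2/2 - m^4/4 := by
    intro x
    have h := is_const_of_deriv_eq_zero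
      (f := fun y => κ^2/2 * (deriv U y)^2 + ((U y)^2/2 - (U y)^4/4))
      (fun y => (hF y).differentiableAt) (fun y => (hF y).deriv) x (π/2)
    rw [h, hd0]
    ring
  have hfirst : ∀ x : ℝ, κ^2 * (deriv U x)^2 = (1 - (U x)^2)^2/2 - (1 - m^2)^2/2 := by
    intro x
    linear_combination 2 * hconst x
  -- boundary values
  have hU0 : U 0 = 0 := by have h := hodd 0; simp at h; linarith
  have hUπ : U π = 0 := by
    have h1 := hodd π
    have h2 := hper (-π)
    rw [show -π + 2*π = π by ring] at h2
    rw [h2] at h1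
    linarith
  -- deriv is even
  have hder_even : ∀ x : ℝ, deriv U (-x) = deriv U x := by
    intro x
    have h1 : HasDerivAt (fun y : ℝ => -U y) (-(deriv U x)) x := ((hd1 x).hasDerivAt).neg
    have h2 : HasDerivAt (fun y : ℝ => U (-y)) (deriv U (-x) * (-1)) x :=
      ((hd1 (-x)).hasDerivAt).comp x (hasDerivAt_neg x)
    have h3 : (fun y : ℝ => U (-y)) = fun y : ℝ => -U y := funext fun y => hodd y
    rw [h3] at h2
    have h4 := h2.unique h1
    linarith
  set g : ℝ → ℝ := fun u => Real.sqrt ((1 - u^2)^2/2 - (1 - m^2)^2/2) with hgdef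
  have hgc : Continuous g := by
    apply Real.continuous_sqrt.comp; continuity
  have hgU : ∀ x : ℝ, g (U x) = κ * |deriv U x| := by
    intro x
    show Real.sqrt _ = _
    rw [show (1 - (U x)^2)^2/2 - (1 - m^2)^2/2 = (κ * deriv U x)^2 by
      rw [mul_pow]; linarith [hfirst x]]
    rw [Real.sqrt_sq_eq_abs, abs_mul, abs_of_pos hκ]
  -- substitution on [0, π/2]
  have hsub1 : ∫ x in (0:ℝ)..(π/2), κ * (deriv U x)^2 = ∫ u in (0:ℝ)..m, g u := by
    have h := intervalIntegral.integral_comp_smul_deriv (a := 0) (b := π/2) (f := U)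
      (f' := deriv U) (g := g) (fun x _ => (hd1 x).hasDerivAt) hcderiv.continuousOn hgc
    rw [hU0] at h
    rw [← h]
    apply intervalIntegral.integral_congr
    intro x hx
    rw [Set.uIcc_of_le hπ2.le] at hx
    have hd : 0 ≤ deriv U x := by
      rcases hx.2.lt_or_eq with h' | h'
      · exact (hpos x ⟨hx.1, h'⟩).le
      · rw [h', hd0]
    simp only [smul_eq_mul, Function.comp_apply]
    rw [hgU x, abs_of_nonneg hd]
    ring
  -- substitution on [π/2, π]
  have hsub2 : ∫ x in (π/2:ℝ)..π, κ * (deriv U x)^2 = ∫ u in (0:ℝ)..m, g u := by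
    have h := intervalIntegral.integral_comp_smul_deriv (a := π/2) (b := π) (f := U)
      (f' := deriv U) (g := g) (fun x _ => (hd1 x).hasDerivAt) hcderiv.continuousOn hgc
    rw [hUπ] at h
    have h2' : ∫ x in (π/2:ℝ)..π, deriv U x • (g ∘ U) x
        = ∫ x in (π/2:ℝ)..π, -(κ * (deriv U x)^2) := by
      apply intervalIntegral.integral_congr
      intro x hx
      rw [Set.uIcc_of_le (by linarith)] at hx
      have hd : deriv U x ≤ 0 := by
        rcases hx.1.lt_or_eq with h' | h'
        · exact (hneg x ⟨h', hx.2⟩).le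
        · rw [← h', hd0]
      simp only [smul_eq_mul, Function.comp_apply]
      rw [hgU x, abs_of_nonpos hd]
      ring
    rw [h2', intervalIntegral.integral_neg] at h
    have h3 := intervalIntegral.integral_symm (μ := volume) (a := m) (b := (0:ℝ)) (f := g)
    rw [← hm] at h
    linarith [h, h3]
  -- evenness
  have hicont : Continuous fun x : ℝ => (deriv U x)^2 := hcderiv.pow 2
  have hsub0 : ∫ x in (-π)..(0:ℝ), (deriv U x)^2 = ∫ x in (0:ℝ)..π, (deriv U x)^2 := by
    have h := intervalIntegral.integral_comp_neg (a := (0:ℝ)) (b := π)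
      (f := fun x => (deriv U x)^2)
    simp only [neg_zero] at h
    rw [← h]
    exact intervalIntegral.integral_congr fun x _ => by rw [hder_even x]
  have hsplit : ∫ x in (-π)..π, (deriv U x)^2
      = (∫ x in (-π)..(0:ℝ), (deriv U x)^2) + ∫ x in (0:ℝ)..π, (deriv U x)^2 :=
    (intervalIntegral.integral_add_adjacent_intervals
      (hicont.intervalIntegrable _ _) (hicont.intervalIntegrable _ _)).symm
  have hsplit2 : ∫ x in (0:ℝ)..π, (deriv U x)^2
      = (∫ x in (0:ℝ)..(π/2), (deriv U x)^2) + ∫ x in (π/2:ℝ)..π, (deriv U x)^2 :=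
    (intervalIntegral.integral_add_adjacent_intervals
      (hicont.intervalIntegrable _ _) (hicont.intervalIntegrable _ _)).symm
  have i1 : κ * ∫ x in (0:ℝ)..(π/2), (deriv U x)^2 = ∫ u in (0:ℝ)..m, g u := by
    rw [← intervalIntegral.integral_const_mul]; exact hsub1
  have i2 : κ * ∫ x in (π/2:ℝ)..π, (deriv U x)^2 = ∫ u in (0:ℝ)..m, g u := by
    rw [← intervalIntegral.integral_const_mul]; exact hsub2
  -- energy computation
  have hint : ∀ x : ℝ, κ^2/2 * (deriv U x)^2 + (1 - U x^2)^2/4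
      = κ^2 * (deriv U x)^2 + (1 - m^2)^2/4 := by
    intro x
    linear_combination (-(1:ℝ)/2) * hfirst x
  have e1 : energy κ U = κ^2 * (∫ x in (-π)..π, (deriv U x)^2) + 2*π*((1 - m^2)^2/4) := by
    rw [energy]
    rw [intervalIntegral.integral_congr (g := fun x => κ^2 * (deriv U x)^2 + (1 - m^2)^2/4)
      (fun x _ => hint x)]
    rw [intervalIntegral.integral_add ((show Continuous (fun x => κ^2 * (deriv U x)^2) from continuous_const.mul hicont).intervalIntegrable _ _)
      (intervalIntegrable_const (μ := volume))]
    rw [intervalIntegral.integral_const_mul, intervalIntegral.integral_const]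
    simp only [smul_eq_mul, sub_neg_eq_add]
    ring
  rw [e1, hsplit, hsub0, hsplit2]
  have expand : κ^2 * ((∫ x in (0:ℝ)..(π/2), (deriv U x)^2) + (∫ x in (π/2:ℝ)..π, (deriv U x)^2)
        + ((∫ x in (0:ℝ)..(π/2), (deriv U x)^2) + (∫ x in (π/2:ℝ)..π, (deriv U x)^2)))
      = 2*κ*(κ * ∫ x in (0:ℝ)..(π/2), (deriv U x)^2)
        + 2*κ*(κ * ∫ x in (π/2:ℝ)..π, (deriv U x)^2) := by ring
  rw [expand, i1, i2]
  ring


set_option maxHeartbeats 1000000 in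
/-- under the tanh-approximation assumption,
`E_κ(U_κ)/κ → (4/3)√2` as `κ → 0⁺`. -/
theorem ground_state_energy_limit (U : ℝ → ℝ → ℝ)
    (hU : ∀ κ ∈ Set.Ioo (0 : ℝ) 1, IsOddZeroUpGroundState κ (U κ))
    (happrox : ∃ c : ℝ, 0 < c ∧ ∃ κ₀ ∈ Set.Ioo (0 : ℝ) 1,
      ∀ κ ∈ Set.Ioo (0 : ℝ) κ₀, ∀ x ∈ Set.Icc (0 : ℝ) (π / 2),
        0 ≤ Real.tanh (x / (Real.sqrt 2 * κ)) - U κ x ∧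
        Real.tanh (x / (Real.sqrt 2 * κ)) - U κ x ≤ Real.exp (-c / κ)) :
    Filter.Tendsto (fun κ : ℝ => energy κ (U κ) / κ)
      (nhdsWithin 0 (Set.Ioi 0)) (nhds (4 / 3 * Real.sqrt 2)) := by
  obtain ⟨c, hc, κ₀, hκ₀, happ⟩ := happrox
  have hπ : (0:ℝ) < π := Real.pi_pos
  have hs2 : (0:ℝ) < Real.sqrt 2 := by positivity
  have h22 : Real.sqrt 2 * Real.sqrt 2 = 2 := Real.mul_self_sqrt (by norm_num)
  have hs2le : Real.sqrt 2 ≤ 2 := by nlinarith [Real.sqrt_nonneg 2]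
  set l := nhdsWithin (0:ℝ) (Set.Ioi 0) with hl
  set b : ℝ := min c 1 with hbdef
  have hb : 0 < b := lt_min hc one_pos
  -- exponential limits
  have hexp : ∀ a : ℝ, 0 < a → Filter.Tendsto (fun κ : ℝ => Real.exp (-a/κ)) l (nhds 0) := by
    intro a ha
    have h1 : Filter.Tendsto (fun κ : ℝ => a * κ⁻¹) l Filter.atTop :=
      Filter.Tendsto.const_mul_atTop ha tendsto_inv_nhdsGT_zero
    have h2 : Filter.Tendsto (fun κ : ℝ => -a/κ) l Filter.atBot := by
      apply Filter.Tendsto.congr (f₁ := fun κ : ℝ => -(a * κ⁻¹))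
      · intro κ; rw [neg_div, div_eq_mul_inv]
      · exact Filter.tendsto_neg_atTop_atBot.comp h1
    exact Real.tendsto_exp_atBot.comp h2
  have hexp2 : Filter.Tendsto (fun κ : ℝ => Real.exp (-(2*b)/κ) / κ) l (nhds 0) := by
    have h1 : Filter.Tendsto (fun t : ℝ => t * Real.exp (-((2*b) * t)))
        Filter.atTop (nhds 0) := by
      have h2 : Filter.Tendsto (fun t : ℝ => (2*b) * t) Filter.atTop Filter.atTop :=
        Filter.Tendsto.const_mul_atTop (by linarith) Filter.tendsto_id
      have h3 := (tendsto_pow_mul_exp_neg_atTop_nhds_zero 1).comp h2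
      have h4 := h3.const_mul (1/(2*b))
      rw [mul_zero] at h4
      apply h4.congr
      intro t
      simp only [Function.comp_apply, pow_one]
      field_simp
    have h5 := h1.comp tendsto_inv_nhdsGT_zero
    apply h5.congr
    intro κ
    simp only [Function.comp_apply]
    rw [div_eq_mul_inv (Real.exp _) κ, mul_comm]
    congr 2
    rw [div_eq_mul_inv, neg_mul]
  have hev : ∀ᶠ κ in l, 0 < κ ∧ κ < κ₀ := by
    have hmem : Set.Ioo (0:ℝ) κ₀ ∈ l := Ioo_mem_nhdsGT_of_mem ⟨le_rfl, hκ₀.1⟩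
    filter_upwards [hmem] with κ hκ using ⟨hκ.1, hκ.2⟩
  -- the eventual package
  have hpack : ∀ᶠ κ in l,
      0 ≤ U κ (π/2) ∧ U κ (π/2) ≤ 1 ∧
      Real.tanh ((π/2) / (Real.sqrt 2 * κ)) - Real.exp (-c/κ) ≤ U κ (π/2) ∧
      U κ (π/2) ≤ Real.tanh ((π/2) / (Real.sqrt 2 * κ)) ∧
      1 - (U κ (π/2))^2 ≤ 6 * Real.exp (-b/κ) ∧
      energy κ (U κ) / κ
        = 4 * (∫ u in (0:ℝ)..(U κ (π/2)),
            Real.sqrt ((1 - u^2)^2/2 - (1 - (U κ (π/2))^2)^2/2))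
          + π * (1 - (U κ (π/2))^2)^2 / (2*κ) := by
    filter_upwards [hev] with κ hκ
    obtain ⟨hκpos, hκlt⟩ := hκ
    have hκ1 : κ ∈ Set.Ioo (0:ℝ) 1 := ⟨hκpos, lt_trans hκlt hκ₀.2⟩
    have hG := hU κ hκ1
    have happκ := happ κ ⟨hκpos, hκlt⟩ (π/2) ⟨by positivity, le_rfl⟩
    have htf := tanhFacts ((π/2) / (Real.sqrt 2 * κ))
    have hmono : StrictMonoOn (U κ) (Set.Icc 0 (π/2)) := by
      apply strictMonoOn_of_deriv_pos (convex_Icc _ _) (hG.1.continuous.continuousOn)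
      intro x hx
      rw [interior_Icc] at hx
      exact hG.2.2.2.2.1 x ⟨hx.1.le, hx.2⟩
    have hU0 : U κ 0 = 0 := by have h := hG.2.2.1 0; simp at h; linarith
    have hm0 : 0 ≤ U κ (π/2) := by
      have h := hmono (Set.left_mem_Icc.mpr (by positivity))
        (Set.right_mem_Icc.mpr (by positivity)) (by positivity)
      linarith
    have hm1 : U κ (π/2) ≤ 1 := by linarith [happκ.1, htf.1]
    refine ⟨hm0, hm1, by linarith [happκ.2], by linarith [happκ.1], ?_, ?_⟩
    · -- exponential bound for 1 - m²
      have hbc : Real.exp (-c/κ) ≤ Real.exp (-b/κ) := by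
        apply Real.exp_le_exp.mpr
        rw [neg_div, neg_div]
        exact neg_le_neg ((div_le_div_iff_of_pos_right hκpos).mpr (min_le_left c 1))
      have hble : b ≤ π / Real.sqrt 2 := by
        rw [le_div_iff₀ hs2]
        nlinarith [min_le_right c 1, Real.pi_gt_three, hb.le]
      have heq2 : (2:ℝ) * ((π/2)/(Real.sqrt 2 * κ)) = (π/Real.sqrt 2)/κ := by
        field_simp
      have hπb : Real.exp (-(2 * ((π/2)/(Real.sqrt 2 * κ)))) ≤ Real.exp (-b/κ) := by
        apply Real.exp_le_exp.mpr
        rw [heq2, neg_div]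
        exact neg_le_neg ((div_le_div_iff_of_pos_right hκpos).mpr hble)
      have h1m : 1 - U κ (π/2) ≤ 3 * Real.exp (-b/κ) := by
        have := htf.2
        linarith [happκ.2]
      nlinarith [h1m, sq_nonneg (1 - U κ (π/2))]
    · -- the energy identity
      have hkey := key_energy hκpos hG
      rw [hkey]
      field_simp
  -- limits
  have hTlim : Filter.Tendsto (fun κ : ℝ => Real.tanh ((π/2) / (Real.sqrt 2 * κ)))
      l (nhds 1) := by
    have hlow : Filter.Tendsto (fun κ : ℝ => 1 - 2 * Real.exp (-(π/Real.sqrt 2)/κ))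
        l (nhds 1) := by
      have h := (hexp (π/Real.sqrt 2) (by positivity)).const_mul 2
      rw [mul_zero] at h
      simpa using tendsto_const_nhds.sub h
    apply tendsto_of_tendsto_of_tendsto_of_le_of_le' hlow tendsto_const_nhds
    · filter_upwards [hev] with κ hκ
      have htf := (tanhFacts ((π/2) / (Real.sqrt 2 * κ))).2
      have heq2 : (2:ℝ) * ((π/2)/(Real.sqrt 2 * κ)) = (π/Real.sqrt 2)/κ := by
        field_simp
      rw [heq2] at htf
      rw [neg_div]
      linarith
    · filter_upwards [hev] with κ hκ
      exact (tanhFacts ((π/2)/(Real.sqrt 2 * κ))).1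
  have hmlim : Filter.Tendsto (fun κ : ℝ => U κ (π/2)) l (nhds 1) := by
    apply tendsto_of_tendsto_of_tendsto_of_le_of_le'
      (g := fun κ => Real.tanh ((π/2)/(Real.sqrt 2 * κ)) - Real.exp (-c/κ))
      (h := fun κ => Real.tanh ((π/2)/(Real.sqrt 2 * κ)))
      (by simpa using hTlim.sub (hexp c hc)) hTlim
    · filter_upwards [hpack] with κ h using h.2.2.1
    · filter_upwards [hpack] with κ h using h.2.2.2.1
  have hval : ((1:ℝ) - 1^3/3)/Real.sqrt 2 = Real.sqrt 2/3 := by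
    rw [div_eq_div_iff hs2.ne' (by norm_num : (3:ℝ) ≠ 0)]
    nlinarith [h22]
  have hPlim : Filter.Tendsto (fun κ : ℝ => (U κ (π/2) - (U κ (π/2))^3/3)/Real.sqrt 2) l
      (nhds (Real.sqrt 2/3)) := by
    rw [← hval]
    exact (hmlim.sub ((hmlim.pow 3).div_const 3)).div_const _
  have hQlim : Filter.Tendsto (fun κ : ℝ => (1 - (U κ (π/2))^2)/Real.sqrt 2) l (nhds 0) := by
    have h := ((tendsto_const_nhds (α := ℝ) (x := (1:ℝ)) (f := l)).sub
      (hmlim.pow 2)).div_const (Real.sqrt 2)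
    simpa using h
  have hIlim : Filter.Tendsto (fun κ : ℝ => ∫ u in (0:ℝ)..(U κ (π/2)),
      Real.sqrt ((1 - u^2)^2/2 - (1 - (U κ (π/2))^2)^2/2)) l (nhds (Real.sqrt 2/3)) := by
    apply tendsto_of_tendsto_of_tendsto_of_le_of_le' (by simpa using hPlim.sub hQlim) hPlim
    · filter_upwards [hpack] with κ h
      exact (integral_est h.1 h.2.1).1
    · filter_upwards [hpack] with κ h
      exact (integral_est h.1 h.2.1).2
  have hRlim : Filter.Tendsto (fun κ : ℝ => π * (1 - (U κ (π/2))^2)^2/(2*κ)) l (nhds 0) := by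
    apply tendsto_of_tendsto_of_tendsto_of_le_of_le'
      (g := fun _ : ℝ => (0:ℝ))
      (h := fun κ : ℝ => 18*π*(Real.exp (-(2*b)/κ)/κ))
      tendsto_const_nhds (by simpa using hexp2.const_mul (18*π))
    · filter_upwards [hev] with κ hκ
      apply div_nonneg (by positivity) (by linarith [hκ.1])
    · filter_upwards [hev, hpack] with κ hκ h
      have he := h.2.2.2.2.1
      have h0 : 0 ≤ 1 - (U κ (π/2))^2 := by nlinarith [h.1, h.2.1]
      have hE : Real.exp (-b/κ) * Real.exp (-b/κ) = Real.exp (-(2*b)/κ) := by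
        rw [← Real.exp_add]; congr 1; ring
      have hsq : (1 - (U κ (π/2))^2)^2 ≤ 36 * Real.exp (-(2*b)/κ) := by
        nlinarith [mul_self_le_mul_self h0 he, hE, Real.exp_pos (-b/κ)]
      have hκi : (0:ℝ) ≤ κ⁻¹ := inv_nonneg.mpr hκ.1.le
      calc π * (1 - (U κ (π/2))^2)^2/(2*κ) = (π * (1 - (U κ (π/2))^2)^2/2) * κ⁻¹ := by
            rw [div_eq_mul_inv, mul_inv]; ring
        _ ≤ (18*π*Real.exp (-(2*b)/κ)) * κ⁻¹ := by
            apply mul_le_mul_of_nonneg_right ?_ hκi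
            nlinarith [hsq, hπ]
        _ = 18*π*(Real.exp (-(2*b)/κ)/κ) := by rw [div_eq_mul_inv]; ring
  have hfin := (hIlim.const_mul 4).add hRlim
  rw [show (4:ℝ)/3*Real.sqrt 2 = 4*(Real.sqrt 2/3) + 0 by ring]
  apply hfin.congr'
  filter_upwards [hpack] with κ h
  exact h.2.2.2.2.2.symm
end
end

section
/- Let κ ∈ (0,1) and let m_κ be the unique positive integer with 1/(m_κ + 1) ≤ κ < 1/m_κ. Let u : ℝ → ℝ be a bounded, twice continuously differentiable, 2π-periodic solution of κ² u'' + u − u³ = 0 on ℝ. Then exactly one of the following holds: (1) u ≡ 1, u ≡ −1, or u ≡ 0; (2) there exist an integer j with 1 ≤ j ≤ m_κ, a constant c ∈ ℝ, and a sign σ ∈ {1, −1} such that the function w(y) := σ · u((y − c)/j) is an odd zero-up ground state for parameter jκ (note 0 < jκ < 1). -/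
open Real MeasureTheory Set

noncomputable section

set_option maxHeartbeats 2000000

section SteadyAux

lemma reg2 {f : ℝ → ℝ} (hf : ContDiff ℝ 2 f) :
    Differentiable ℝ f ∧ Differentiable ℝ (deriv f) ∧ Continuous (deriv (deriv f)) := by
  have h2 : ContDiff ℝ ((1:WithTop ℕ∞) + 1) f := by norm_num; exact hf
  rw [contDiff_succ_iff_deriv] at h2
  obtain ⟨h1, -, h3⟩ := h2
  have h4 : ContDiff ℝ ((0:WithTop ℕ∞) + 1) (deriv f) := by norm_num; exact h3
  rw [contDiff_succ_iff_deriv] at h4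
  exact ⟨h1, h4.1, (contDiff_zero.mp h4.2.2)⟩

lemma uniq_fwd {κ C : ℝ} (hκ : 0 < κ) {u v : ℝ → ℝ}
    (hu : ContDiff ℝ 2 u) (hv : ContDiff ℝ 2 v)
    (hub : ∀ x, |u x| ≤ C) (hvb : ∀ x, |v x| ≤ C)
    (hue : ∀ x, κ ^ 2 * deriv (deriv u) x + u x - u x ^ 3 = 0)
    (hve : ∀ x, κ ^ 2 * deriv (deriv v) x + v x - v x ^ 3 = 0)
    {x₀ : ℝ} (h0 : u x₀ = v x₀) (h0' : deriv u x₀ = deriv v x₀) :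
    ∀ x ≥ x₀, u x = v x := by
  obtain ⟨hud, hud', _⟩ := reg2 hu
  obtain ⟨hvd, hvd', _⟩ := reg2 hv
  set L : ℝ := 3 * C ^ 2 * (1 + κ⁻¹ ^ 2) with hLdef
  set h : ℝ → ℝ := fun x => (u x - v x) ^ 2 + κ ^ 2 * (deriv u x - deriv v x) ^ 2 with hh
  have hder : ∀ x, HasDerivAt h
      (2 * (deriv u x - deriv v x) * ((u x) ^ 3 - (v x) ^ 3)) x := by
    intro x
    have Hu : HasDerivAt u (deriv u x) x := (hud x).hasDerivAt
    have Hv : HasDerivAt v (deriv v x) x := (hvd x).hasDerivAt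
    have Hu' : HasDerivAt (deriv u) (deriv (deriv u) x) x := (hud' x).hasDerivAt
    have Hv' : HasDerivAt (deriv v) (deriv (deriv v) x) x := (hvd' x).hasDerivAt
    have H1 : HasDerivAt (fun x => (u x - v x) ^ 2)
        (2 * (u x - v x) * (deriv u x - deriv v x)) x := by
      simpa [mul_comm, mul_assoc] using (Hu.sub Hv).fun_pow 2
    have H2 : HasDerivAt (fun x => κ ^ 2 * (deriv u x - deriv v x) ^ 2)
        (κ ^ 2 * (2 * (deriv u x - deriv v x) *
          (deriv (deriv u) x - deriv (deriv v) x))) x := by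
      have := ((Hu'.sub Hv').pow 2).const_mul (κ ^ 2)
      simpa [mul_comm, mul_assoc] using this
    have Htot := H1.add H2
    have hval : 2 * (u x - v x) * (deriv u x - deriv v x) +
        κ ^ 2 * (2 * (deriv u x - deriv v x) *
          (deriv (deriv u) x - deriv (deriv v) x)) =
        2 * (deriv u x - deriv v x) * ((u x) ^ 3 - (v x) ^ 3) := by
      linear_combination (2 * (deriv u x - deriv v x)) * (hue x) -
        (2 * (deriv u x - deriv v x)) * (hve x)
    rw [hval] at Htot
    exact Htot
  have hC0 : 0 ≤ C := le_trans (abs_nonneg _) (hub 0)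
  have key : ∀ x, 2 * (deriv u x - deriv v x) * ((u x) ^ 3 - (v x) ^ 3) ≤ L * h x := by
    intro x
    have h1 := hub x; have h2 := hvb x
    have hu1 : u x ≤ C := (abs_le.mp h1).2
    have hu2 : -C ≤ u x := (abs_le.mp h1).1
    have hv1 : v x ≤ C := (abs_le.mp h2).2
    have hv2 : -C ≤ v x := (abs_le.mp h2).1
    have hs1 : 0 ≤ (u x) ^ 2 + u x * v x + (v x) ^ 2 := by nlinarith [sq_nonneg (u x + v x)]
    have hs2 : (u x) ^ 2 + u x * v x + (v x) ^ 2 ≤ 3 * C ^ 2 := by nlinarith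
    have cube : (u x) ^ 3 - (v x) ^ 3 = (u x - v x) * ((u x) ^ 2 + u x * v x + (v x) ^ 2) := by ring
    rw [cube]
    have h2ab : 2 * (deriv u x - deriv v x) * (u x - v x) ≤
        (u x - v x) ^ 2 + (deriv u x - deriv v x) ^ 2 := by nlinarith [sq_nonneg (u x - v x - (deriv u x - deriv v x))]
    have hκ2 : (0:ℝ) < κ ^ 2 := by positivity
    have hκi : κ⁻¹ ^ 2 * κ ^ 2 = 1 := by field_simp
    have hfin : ((u x - v x) ^ 2 + (deriv u x - deriv v x) ^ 2) * (3 * C ^ 2) ≤ L * h x := by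
      show ((u x - v x) ^ 2 + (deriv u x - deriv v x) ^ 2) * (3 * C ^ 2) ≤
        3 * C ^ 2 * (1 + κ⁻¹ ^ 2) * ((u x - v x) ^ 2 + κ ^ 2 * (deriv u x - deriv v x) ^ 2)
      nlinarith [hκi, mul_nonneg (sq_nonneg C) (mul_nonneg (sq_nonneg κ) (sq_nonneg (deriv u x - deriv v x))),
        mul_nonneg (sq_nonneg C) (mul_nonneg (sq_nonneg κ⁻¹) (sq_nonneg (u x - v x)))]
    calc 2 * (deriv u x - deriv v x) * ((u x - v x) * ((u x) ^ 2 + u x * v x + (v x) ^ 2))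
        ≤ ((u x - v x) ^ 2 + (deriv u x - deriv v x) ^ 2) * (3 * C ^ 2) := by nlinarith [mul_le_mul_of_nonneg_left hs2 (le_of_lt (by positivity : (0:ℝ) < 1)), sq_nonneg (u x - v x), sq_nonneg (deriv u x - deriv v x)]
      _ ≤ L * h x := hfin
  -- Gronwall-type argument
  have hφder : ∀ x, HasDerivAt (fun x => Real.exp (-L * x) * h x)
      (Real.exp (-L * x) * (-L) * h x +
        Real.exp (-L * x) * (2 * (deriv u x - deriv v x) * ((u x) ^ 3 - (v x) ^ 3))) x := by
    intro x
    have He : HasDerivAt (fun x : ℝ => Real.exp (-L * x)) (Real.exp (-L * x) * (-L)) x := by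
      have : HasDerivAt (fun x : ℝ => -L * x) (-L) x := by
        simpa using (hasDerivAt_id x).const_mul (-L)
      simpa using this.exp
    exact He.mul (hder x)
  have hφnonpos : ∀ x, Real.exp (-L * x) * (-L) * h x +
      Real.exp (-L * x) * (2 * (deriv u x - deriv v x) * ((u x) ^ 3 - (v x) ^ 3)) ≤ 0 := by
    intro x
    have he : 0 < Real.exp (-L * x) := Real.exp_pos _
    have := key x
    nlinarith
  have hanti : AntitoneOn (fun x => Real.exp (-L * x) * h x) (Set.Ici x₀) := by
    apply antitoneOn_of_deriv_nonpos (convex_Ici x₀)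
    · exact fun x _ => ((hφder x).continuousAt).continuousWithinAt
    · exact fun x _ => (hφder x).differentiableAt.differentiableWithinAt
    · intro x _
      rw [(hφder x).deriv]
      exact hφnonpos x
  have hh0 : h x₀ = 0 := by
    simp only [hh, h0, h0']
    ring
  intro x hx
  have hle : Real.exp (-L * x) * h x ≤ Real.exp (-L * x₀) * h x₀ :=
    hanti (Set.self_mem_Ici) hx hx
  rw [hh0, mul_zero] at hle
  have hpos : 0 < Real.exp (-L * x) := Real.exp_pos _
  have hhx : h x ≤ 0 := by nlinarith
  have hsq : (u x - v x) ^ 2 ≤ 0 := by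
    have h2 : 0 ≤ κ ^ 2 * (deriv u x - deriv v x) ^ 2 := by positivity
    have : (u x - v x) ^ 2 + κ ^ 2 * (deriv u x - deriv v x) ^ 2 ≤ 0 := hhx
    nlinarith
  have : u x - v x = 0 := by nlinarith [sq_nonneg (u x - v x)]
  linarith

lemma reflect_props {κ : ℝ} {u : ℝ → ℝ} (hu : ContDiff ℝ 2 u)
    (hue : ∀ x, κ ^ 2 * deriv (deriv u) x + u x - u x ^ 3 = 0) (σ p : ℝ)
    (hσ : σ ^ 3 = σ) :
    ContDiff ℝ 2 (fun x => σ * u (p - x)) ∧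
    (∀ x, deriv (fun x => σ * u (p - x)) x = -σ * deriv u (p - x)) ∧
    (∀ x, κ ^ 2 * deriv (deriv (fun x => σ * u (p - x))) x +
      σ * u (p - x) - (σ * u (p - x)) ^ 3 = 0) := by
  have hcd : ContDiff ℝ 2 (fun x => σ * u (p - x)) := by
    exact contDiff_const.mul (hu.comp (contDiff_const.sub contDiff_id))
  have hd1 : ∀ x, deriv (fun x => σ * u (p - x)) x = -σ * deriv u (p - x) := by
    intro x
    rw [deriv_const_mul_field, deriv_comp_const_sub]
    ring
  have hd2 : ∀ x, deriv (deriv (fun x => σ * u (p - x))) x =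
      σ * deriv (deriv u) (p - x) := by
    intro x
    rw [funext hd1, deriv_const_mul_field, deriv_comp_const_sub]
    ring
  refine ⟨hcd, hd1, fun x => ?_⟩
  rw [hd2]
  linear_combination σ * hue (p - x) - (u (p - x)) ^ 3 * hσ

lemma uniq {κ C : ℝ} (hκ : 0 < κ) {u v : ℝ → ℝ}
    (hu : ContDiff ℝ 2 u) (hv : ContDiff ℝ 2 v)
    (hub : ∀ x, |u x| ≤ C) (hvb : ∀ x, |v x| ≤ C)
    (hue : ∀ x, κ ^ 2 * deriv (deriv u) x + u x - u x ^ 3 = 0)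
    (hve : ∀ x, κ ^ 2 * deriv (deriv v) x + v x - v x ^ 3 = 0)
    {x₀ : ℝ} (h0 : u x₀ = v x₀) (h0' : deriv u x₀ = deriv v x₀) :
    ∀ x, u x = v x := by
  intro x
  rcases le_total x₀ x with hx | hx
  · exact uniq_fwd hκ hu hv hub hvb hue hve h0 h0' x hx
  · obtain ⟨hcu, hdu, heu⟩ := reflect_props hu hue 1 (2 * x₀) (by norm_num)
    obtain ⟨hcv, hdv, hev⟩ := reflect_props hv hve 1 (2 * x₀) (by norm_num)
    have hub' : ∀ t, |(1:ℝ) * u (2 * x₀ - t)| ≤ C := fun t => by simpa using hub _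
    have hvb' : ∀ t, |(1:ℝ) * v (2 * x₀ - t)| ≤ C := fun t => by simpa using hvb _
    have e0 : (1:ℝ) * u (2 * x₀ - x₀) = 1 * v (2 * x₀ - x₀) := by
      rw [show 2 * x₀ - x₀ = x₀ by ring, h0]
    have e0' : deriv (fun t => (1:ℝ) * u (2 * x₀ - t)) x₀ =
        deriv (fun t => (1:ℝ) * v (2 * x₀ - t)) x₀ := by
      rw [hdu x₀, hdv x₀, show 2 * x₀ - x₀ = x₀ by ring, h0']
    have := uniq_fwd hκ hcu hcv hub' hvb' heu hev e0 e0' (2 * x₀ - x) (by linarith)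
    have h2 : 2 * x₀ - (2 * x₀ - x) = x := by ring
    rw [h2] at this
    linarith

lemma energy_const {κ : ℝ} {u : ℝ → ℝ}
    (hud : Differentiable ℝ u) (hud' : Differentiable ℝ (deriv u))
    (hue : ∀ x, κ ^ 2 * deriv (deriv u) x + u x - u x ^ 3 = 0) (x y : ℝ) :
    κ ^ 2 * (deriv u x) ^ 2 / 2 + ((u x) ^ 2 / 2 - (u x) ^ 4 / 4) =
    κ ^ 2 * (deriv u y) ^ 2 / 2 + ((u y) ^ 2 / 2 - (u y) ^ 4 / 4) := by
  set E : ℝ → ℝ := fun t => κ ^ 2 * (deriv u t) ^ 2 / 2 + ((u t) ^ 2 / 2 - (u t) ^ 4 / 4)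
    with hE
  have hder : ∀ t, HasDerivAt E 0 t := by
    intro t
    have Hu : HasDerivAt u (deriv u t) t := (hud t).hasDerivAt
    have Hu' : HasDerivAt (deriv u) (deriv (deriv u) t) t := (hud' t).hasDerivAt
    have H1 : HasDerivAt (fun s => κ ^ 2 * (deriv u s) ^ 2 / 2)
        (κ ^ 2 * (2 * deriv u t * deriv (deriv u) t) / 2) t := by
      simpa [mul_comm, mul_assoc] using ((Hu'.pow 2).const_mul (κ ^ 2)).div_const 2
    have H2 : HasDerivAt (fun s => (u s) ^ 2 / 2 - (u s) ^ 4 / 4)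
        (2 * u t * deriv u t / 2 - 4 * (u t) ^ 3 * deriv u t / 4) t := by
      have A := (Hu.fun_pow 2).div_const 2
      have B := (Hu.fun_pow 4).div_const 4
      simpa [mul_comm, mul_assoc] using A.fun_sub B
    have Htot := H1.add H2
    have hval : κ ^ 2 * (2 * deriv u t * deriv (deriv u) t) / 2 +
        (2 * u t * deriv u t / 2 - 4 * (u t) ^ 3 * deriv u t / 4) = 0 := by
      linear_combination (deriv u t) * hue t
    rw [hval] at Htot
    exact Htot
  exact is_const_of_deriv_eq_zero (fun t => (hder t).differentiableAt)
    (fun t => (hder t).deriv) x y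

lemma exists_max {u : ℝ → ℝ} (hc : Continuous u) (hper : Function.Periodic u (2 * π)) :
    ∃ xM : ℝ, ∀ x, u x ≤ u xM := by
  have h2π : (0:ℝ) < 2 * π := by positivity
  obtain ⟨xM, hxM, hmax⟩ := isCompact_Icc.exists_isMaxOn
    (nonempty_Icc.2 (by linarith) : (Icc (0:ℝ) (2*π)).Nonempty) hc.continuousOn
  refine ⟨xM, fun x => ?_⟩
  obtain ⟨y, hy, hxy⟩ := hper.exists_mem_Ico₀ h2π x
  rw [hxy]
  exact hmax (Ico_subset_Icc_self hy)

lemma deriv_periodic {u : ℝ → ℝ} (hper : Function.Periodic u (2 * π)) :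
    Function.Periodic (deriv u) (2 * π) := by
  intro x
  have h1 : (fun y => u (y + 2 * π)) = u := funext fun y => hper y
  calc deriv u (x + 2 * π) = deriv (fun y => u (y + 2 * π)) x := by
        rw [deriv_comp_add_const]
    _ = deriv u x := by rw [h1]

lemma const_one_props (κ : ℝ) (K : ℝ) (hK : K ^ 3 = K) :
    ContDiff ℝ 2 (fun _ : ℝ => K) ∧
    (∀ x : ℝ, κ ^ 2 * deriv (deriv (fun _ : ℝ => K)) x + K - K ^ 3 = 0) := by
  refine ⟨contDiff_const, fun x => ?_⟩
  rw [deriv_const']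
  simp [hK]

lemma max_lt_one {κ C : ℝ} (hκ : 0 < κ) {u : ℝ → ℝ} (hreg : ContDiff ℝ 2 u)
    (hbC : ∀ x, |u x| ≤ C) (hper : Function.Periodic u (2 * π))
    (heq : ∀ x, κ ^ 2 * deriv (deriv u) x + u x - u x ^ 3 = 0)
    (hnc : ∃ x, deriv u x ≠ 0)
    {xM : ℝ} (hmax : ∀ x, u x ≤ u xM) : u xM < 1 := by
  obtain ⟨hud, hud', hcont2⟩ := reg2 hreg
  have hC0 : 0 ≤ C := le_trans (abs_nonneg _) (hbC 0)
  have hbC1 : ∀ x, |u x| ≤ C + 1 := fun x => by linarith [hbC x]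
  have hcrit : deriv u xM = 0 :=
    IsLocalMax.deriv_eq_zero (Filter.Eventually.of_forall hmax)
  have hdp : Function.Periodic (deriv u) (2 * π) := deriv_periodic hper
  -- min of u
  obtain ⟨xm, hxm⟩ := exists_max (hreg.continuous.neg)
    (fun x => by simp [hper x])
  have hmin : ∀ x, u xm ≤ u x := fun x => by have := hxm x; simpa using this
  -- rule out all-≥-1
  rcases lt_trichotomy (u xM) 1 with h | h | h
  · exact h
  · -- u xM = 1 : uniqueness with constant 1
    exfalso
    obtain ⟨hc1, he1⟩ := const_one_props κ 1 (by norm_num)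
    have hb1 : ∀ x : ℝ, |(fun _ : ℝ => (1:ℝ)) x| ≤ C + 1 := fun x => by
      simp; linarith
    have := uniq (C := C + 1) hκ hreg hc1 hbC1 hb1 heq he1
      (x₀ := xM) (by simpa using h) (by rw [hcrit, deriv_const'])
    obtain ⟨x₁, hx₁⟩ := hnc
    have : u = fun _ => (1:ℝ) := funext this
    rw [this, deriv_const'] at hx₁
    exact hx₁ rfl
  · exfalso
    -- first: min < 1
    have hblt : u xm < 1 := by
      by_contra hb
      push_neg at hb
      -- u ≥ 1 everywhere, so u'' ≥ 0, so deriv u monotone, so deriv u ≡ 0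
      have hge : ∀ x, 1 ≤ u x := fun x => le_trans hb (hmin x)
      have hdd : ∀ x, 0 ≤ deriv (deriv u) x := by
        intro x
        have h1 := hge x
        have h2 := heq x
        have hκ2 : (0:ℝ) < κ ^ 2 := by positivity
        have h3 : 0 ≤ u x ^ 3 - u x := by
          nlinarith [mul_nonneg (mul_nonneg (show (0:ℝ) ≤ u x by linarith)
            (show (0:ℝ) ≤ u x - 1 by linarith)) (show (0:ℝ) ≤ u x + 1 by linarith)]
        have h4 : deriv (deriv u) x = (u x ^ 3 - u x) / κ ^ 2 := by
          field_simp; linarith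
        rw [h4]
        exact div_nonneg h3 (le_of_lt hκ2)
      have hmono : Monotone (deriv u) := monotone_of_deriv_nonneg hud' hdd
      have hzero : ∀ x, deriv u x = 0 := by
        intro x
        obtain ⟨n, hn⟩ := exists_nat_ge ((x - xM) / (2 * π))
        obtain ⟨n', hn'⟩ := exists_nat_ge ((xM - x) / (2 * π))
        have h2π : (0:ℝ) < 2 * π := by positivity
        have hx1 : x ≤ xM + n * (2 * π) := by
          rw [div_le_iff₀ h2π] at hn; linarith
        have hx2 : xM - n' * (2 * π) ≤ x := by
          rw [div_le_iff₀ h2π] at hn'; linarith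
        have e1 : deriv u (xM + n * (2 * π)) = 0 := by
          rw [(hdp.nat_mul n) xM]; exact hcrit
        have e2 : deriv u (xM - n' * (2 * π)) = 0 := by
          rw [hdp.sub_nat_mul_eq n']; exact hcrit
        have l1 := hmono hx1
        have l2 := hmono hx2
        rw [e1] at l1; rw [e2] at l2
        linarith
      obtain ⟨x₁, hx₁⟩ := hnc
      exact hx₁ (hzero x₁)
    -- IVT: some point with u = 1
    have h1m : (1:ℝ) ∈ uIcc (u xm) (u xM) := by
      rw [mem_uIcc]; left; exact ⟨le_of_lt hblt, le_of_lt h⟩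
    obtain ⟨xs, _, hxs⟩ := intermediate_value_uIcc
      (hreg.continuous.continuousOn (s := uIcc xm xM)) h1m
    -- energy contradiction
    have hE := energy_const hud hud' heq xs xM
    rw [hxs, hcrit] at hE
    have hsq : 0 ≤ κ ^ 2 * (deriv u xs) ^ 2 / 2 := by positivity
    nlinarith [hE, hsq, sq_nonneg (u xM ^ 2 - 1), h, sq_nonneg (u xM - 1)]

lemma nonconst_case (κ : ℝ) (hκ : 0 < κ)
    (m : ℕ) (hml : 1 / ((m : ℝ) + 1) ≤ κ)
    (u : ℝ → ℝ) (hreg : ContDiff ℝ 2 u) (C : ℝ) (hbC : ∀ x, |u x| ≤ C)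
    (hper : Function.Periodic u (2 * π))
    (heq : ∀ x, κ ^ 2 * deriv (deriv u) x + u x - u x ^ 3 = 0)
    (hnc : ∃ x, deriv u x ≠ 0) :
    ∃ j : ℕ, 1 ≤ j ∧ j ≤ m ∧ ∃ c : ℝ, ∃ σ : ℝ, (σ = 1 ∨ σ = -1) ∧
      IsOddZeroUpGroundState ((j : ℝ) * κ) (fun y : ℝ => σ * u ((y - c) / (j : ℝ))) := by
  obtain ⟨hud, hud', hcont2⟩ := reg2 hreg
  have hκ2 : (0:ℝ) < κ ^ 2 := by positivity
  have hπ : (0:ℝ) < π := Real.pi_pos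
  -- max and min
  obtain ⟨xM, hmaxx⟩ := exists_max hreg.continuous hper
  obtain ⟨xm, hxm⟩ := exists_max hreg.continuous.neg (fun x => by simp [hper x])
  have hmin : ∀ x, u xm ≤ u x := fun x => by have := hxm x; simpa using this
  have hcritM : deriv u xM = 0 :=
    IsLocalMax.deriv_eq_zero (Filter.Eventually.of_forall hmaxx)
  have hcritm : deriv u xm = 0 :=
    IsLocalMin.deriv_eq_zero (Filter.Eventually.of_forall hmin)
  set a := u xM with ha
  -- a < 1 and -1 < u xm
  have ha1 : a < 1 := max_lt_one hκ hreg hbC hper heq hnc hmaxx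
  have hnegreg : ContDiff ℝ 2 (fun x => -u x) := hreg.neg
  have hnegb : ∀ x, |(fun x => -u x) x| ≤ C := fun x => by simpa using hbC x
  have hnegper : Function.Periodic (fun x => -u x) (2 * π) := fun x => by simp [hper x]
  have hnegd : ∀ x, deriv (fun x => -u x) x = -deriv u x := fun x => deriv.neg
  have hnegdd : ∀ x, deriv (deriv (fun x => -u x)) x = -deriv (deriv u) x := by
    intro x
    rw [funext hnegd]
    exact deriv.neg
  have hnegeq : ∀ x, κ ^ 2 * deriv (deriv (fun x => -u x)) x +
      (fun x => -u x) x - ((fun x => -u x) x) ^ 3 = 0 := by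
    intro x
    rw [hnegdd x]
    simpa using by linear_combination -(heq x)
  have hnegnc : ∃ x, deriv (fun x => -u x) x ≠ 0 := by
    obtain ⟨x₁, hx₁⟩ := hnc
    exact ⟨x₁, by rw [hnegd x₁]; simpa using hx₁⟩
  have hnegmax : ∀ x, (fun x => -u x) x ≤ (fun x => -u x) xm := fun x => by
    simpa using hmin x
  have hb1 : -u xm < 1 := max_lt_one hκ hnegreg hnegb hnegper hnegeq hnegnc hnegmax
  -- energy identity
  have hE : ∀ x, κ ^ 2 * (deriv u x) ^ 2 / 2 + ((u x) ^ 2 / 2 - (u x) ^ 4 / 4) =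
      (a ^ 2 / 2 - a ^ 4 / 4) := by
    intro x
    have := energy_const hud hud' heq x xM
    rw [hcritM] at this
    rw [this]; ring
  -- b = -a, 0 < a
  have hFab : a ^ 2 / 2 - a ^ 4 / 4 = (u xm) ^ 2 / 2 - (u xm) ^ 4 / 4 := by
    have := hE xm
    rw [hcritm] at this
    linarith [this]
  have hba : u xm < a := by
    rcases lt_or_ge (u xm) a with h | h
    · exact h
    · exfalso
      have hconst : ∀ x, u x = a := fun x => le_antisymm (hmaxx x) (le_trans h (hmin x))
      obtain ⟨x₁, hx₁⟩ := hnc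
      have : u = fun _ => a := funext hconst
      rw [this, deriv_const'] at hx₁
      exact hx₁ rfl
  have hbm : u xm = -a := by
    have h1 : (a ^ 2 - (u xm) ^ 2) * (2 - a ^ 2 - (u xm) ^ 2) = 0 := by linarith [hFab]; 
    have h2 : 2 - a ^ 2 - (u xm) ^ 2 > 0 := by nlinarith [hb1, ha1, hba]
    have h3 : a ^ 2 = (u xm) ^ 2 := by
      rcases mul_eq_zero.mp h1 with h | h
      · linarith
      · linarith
    nlinarith [hba]
  have ha0 : 0 < a := by nlinarith [hba, hbm]
  have hbounds : ∀ x, -a ≤ u x ∧ u x ≤ a := fun x => ⟨hbm ▸ hmin x, hmaxx x⟩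
  -- pointwise derivative formula
  have hform : ∀ x, κ ^ 2 * (deriv u x) ^ 2 =
      (a ^ 2 - (u x) ^ 2) * (2 - a ^ 2 - (u x) ^ 2) / 2 := by
    intro x
    have := hE x
    linarith [this]
  -- critical points
  have hcrit_iff : ∀ x, deriv u x = 0 ↔ (u x = a ∨ u x = -a) := by
    intro x
    constructor
    · intro h
      have h0 := hform x
      rw [h] at h0
      have h2 : 2 - a ^ 2 - (u x) ^ 2 > 0 := by nlinarith [(hbounds x).1, (hbounds x).2, ha1, ha0]
      have h3 : a ^ 2 - (u x) ^ 2 = 0 := by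
        rcases mul_eq_zero.mp (by linarith [h0] : (a ^ 2 - (u x) ^ 2) * (2 - a ^ 2 - (u x) ^ 2) = 0) with h | h
        · exact h
        · linarith
      have : (u x - a) * (u x + a) = 0 := by linarith [h3]
      rcases mul_eq_zero.mp this with h | h
      · left; linarith
      · right; linarith
    · intro h
      have h0 := hform x
      have hz : (a ^ 2 - (u x) ^ 2) = 0 := by rcases h with h | h <;> rw [h] <;> ring
      rw [hz] at h0
      simp at h0
      rcases h0 with h0 | h0
      · exact absurd h0 (ne_of_gt hκ)
      · exact h0
  -- second derivative at max is negative
  have hddM : deriv (deriv u) xM < 0 := by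
    have h2 := heq xM
    have h3 : a ^ 3 - a < 0 := by nlinarith [ha0, ha1]
    nlinarith [h2, hκ2]
  -- a small interval to the right of xM where u' < 0
  obtain ⟨δ, hδ0, hδprop⟩ : ∃ δ > 0, ∀ x ∈ Icc xM (xM + δ), deriv (deriv u) x < 0 := by
    have hev : ∀ᶠ x in nhds xM, deriv (deriv u) x < 0 :=
      (hcont2.continuousAt (x := xM)).eventually_lt continuousAt_const hddM
    obtain ⟨ε, hε0, hball⟩ := Metric.eventually_nhds_iff.mp hev
    refine ⟨ε/2, by linarith, fun x hx => hball ?_⟩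
    rw [Real.dist_eq, abs_lt]
    constructor <;> [linarith [hx.1]; linarith [hx.2]]
  have hneg0 : ∀ x ∈ Ioc xM (xM + δ), deriv u x < 0 := by
    intro x hx
    have hanti : StrictAntiOn (deriv u) (Icc xM (xM + δ)) := by
      apply strictAntiOn_of_deriv_neg (convex_Icc _ _) (hud'.continuous.continuousOn)
      intro y hy
      rw [interior_Icc] at hy
      exact hδprop y ⟨le_of_lt hy.1, le_of_lt hy.2⟩
    have := hanti (left_mem_Icc.mpr (by linarith)) ⟨le_of_lt hx.1, hx.2⟩ hx.1
    rw [hcritM] at this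
    exact this
  -- next critical point
  have hSclosed : IsClosed (Ici (xM + δ) ∩ {x | deriv u x = 0}) :=
    isClosed_Ici.inter (isClosed_eq hud'.continuous continuous_const)
  have hSne : (Ici (xM + δ) ∩ {x | deriv u x = 0}).Nonempty := by
    by_contra hS
    rw [Set.not_nonempty_iff_eq_empty] at hS
    have hno : ∀ x, xM + δ ≤ x → deriv u x ≠ 0 := by
      intro x hx h0
      have : x ∈ Ici (xM + δ) ∩ {x | deriv u x = 0} := ⟨hx, h0⟩
      rw [hS] at this
      exact this
    have hneg : ∀ x, xM + δ ≤ x → deriv u x < 0 := by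
      intro x hx
      rcases lt_trichotomy (deriv u x) 0 with h | h | h
      · exact h
      · exact absurd h (hno x hx)
      · exfalso
        rcases eq_or_lt_of_le hx with he | hlt
        · have := hneg0 (xM + δ) ⟨by linarith, le_refl _⟩
          rw [he] at this
          linarith
        · have hc : ContinuousOn (deriv u) (Icc (xM + δ) x) := hud'.continuous.continuousOn
          have h0mem : (0:ℝ) ∈ Ioo (deriv u (xM + δ)) (deriv u x) :=
            ⟨hneg0 (xM + δ) ⟨by linarith, le_refl _⟩, h⟩
          obtain ⟨z, hz, hz0⟩ := intermediate_value_Ioo (le_of_lt hlt) hc h0mem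
          exact hno z (le_of_lt hz.1) hz0
    have hanti : StrictAntiOn u (Icc (xM + δ) (xM + δ + 2 * π)) := by
      apply strictAntiOn_of_deriv_neg (convex_Icc _ _) (hreg.continuous.continuousOn)
      intro y hy
      rw [interior_Icc] at hy
      exact hneg y (le_of_lt hy.1)
    have h2π : (0:ℝ) < 2 * π := by positivity
    have := hanti (left_mem_Icc.mpr (by linarith)) (right_mem_Icc.mpr (by linarith)) (by linarith)
    rw [hper (xM + δ)] at this
    exact lt_irrefl _ this
  have hSbdd : BddBelow (Ici (xM + δ) ∩ {x | deriv u x = 0}) :=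
    (BddBelow.mono inter_subset_left bddBelow_Ici)
  set L : ℝ := sInf (Ici (xM + δ) ∩ {x | deriv u x = 0}) with hLdef
  have hLmem := hSclosed.csInf_mem hSne hSbdd
  have hL1 : xM + δ ≤ L := hLmem.1
  have hL2 : deriv u L = 0 := hLmem.2
  have hLgt : xM < L := by linarith
  -- u' < 0 strictly between xM and L
  have hneg : ∀ y ∈ Ioo xM L, deriv u y < 0 := by
    intro y hy
    rcases le_or_gt y (xM + δ) with h | h
    · exact hneg0 y ⟨hy.1, h⟩
    · rcases lt_trichotomy (deriv u y) 0 with h0 | h0 | h0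
      · exact h0
      · exfalso
        have : y ∈ Ici (xM + δ) ∩ {x | deriv u x = 0} := ⟨le_of_lt h, h0⟩
        have := csInf_le hSbdd this
        rw [← hLdef] at this
        linarith [hy.2]
      · exfalso
        have hc : ContinuousOn (deriv u) (Icc (xM + δ) y) := hud'.continuous.continuousOn
        have h0mem : (0:ℝ) ∈ Ioo (deriv u (xM + δ)) (deriv u y) :=
          ⟨hneg0 (xM + δ) ⟨by linarith, le_refl _⟩, h0⟩
        obtain ⟨z, hz, hz0⟩ := intermediate_value_Ioo (le_of_lt h) hc h0mem
        have : z ∈ Ici (xM + δ) ∩ {x | deriv u x = 0} := ⟨le_of_lt hz.1, hz0⟩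
        have := csInf_le hSbdd this
        rw [← hLdef] at this
        linarith [hz.2, hy.2]
  have hanti : StrictAntiOn u (Icc xM L) := by
    apply strictAntiOn_of_deriv_neg (convex_Icc _ _) (hreg.continuous.continuousOn)
    intro y hy
    rw [interior_Icc] at hy
    exact hneg y hy
  have huL : u L = -a := by
    have h1 : u L < a := by
      have := hanti (left_mem_Icc.mpr (by linarith)) (right_mem_Icc.mpr (by linarith)) hLgt
      exact this
    rcases (hcrit_iff L).mp hL2 with h | h
    · exact absurd h (by linarith)
    · exact h
  set ℓ : ℝ := L - xM with hℓdef
  have hℓ0 : 0 < ℓ := by rw [hℓdef]; linarith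
  -- symmetry about critical points
  have hsym : ∀ p, deriv u p = 0 → ∀ x, u (2 * p - x) = u x := by
    intro p hp x
    obtain ⟨hcv, hdv, hev⟩ := reflect_props hreg heq 1 (2 * p) (by norm_num)
    have hvb : ∀ t, |(1:ℝ) * u (2 * p - t)| ≤ C := fun t => by simpa using hbC _
    have h0 : u p = 1 * u (2 * p - p) := by rw [show 2 * p - p = p by ring]; ring
    have h0' : deriv u p = deriv (fun t => (1:ℝ) * u (2 * p - t)) p := by
      rw [hdv p, show 2 * p - p = p by ring, hp]; ring
    have := uniq hκ hreg hcv hbC hvb heq hev h0 h0' x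
    simpa using this.symm
  -- oddness about zeros
  have hoddsym : ∀ z, u z = 0 → ∀ x, u (2 * z - x) = -u x := by
    intro z hz x
    obtain ⟨hcv, hdv, hev⟩ := reflect_props hreg heq (-1) (2 * z) (by norm_num)
    have hvb : ∀ t, |(-1:ℝ) * u (2 * z - t)| ≤ C := fun t => by simpa using hbC _
    have h0 : u z = -1 * u (2 * z - z) := by rw [show 2 * z - z = z by ring, hz]; ring
    have h0' : deriv u z = deriv (fun t => (-1:ℝ) * u (2 * z - t)) z := by
      rw [hdv z, show 2 * z - z = z by ring]; ring
    have := uniq hκ hreg hcv hbC hvb heq hev h0 h0' x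
    have h2 : -1 * u (2 * z - x) = -u (2 * z - x) := by ring
    rw [h2] at this
    linarith [this]
  -- derivative antisymmetry about critical points
  have hdsym : ∀ p, deriv u p = 0 → ∀ x, deriv u (2 * p - x) = -deriv u x := by
    intro p hp x
    have hfun : (fun x => u (2 * p - x)) = u := funext (hsym p hp)
    have := deriv_comp_const_sub u (2 * p) x
    rw [hfun] at this
    linarith [this]
  -- period 2ℓ
  have hper2 : ∀ x, u (x + 2 * ℓ) = u x := by
    intro x
    have h1 := hsym L hL2 (2 * xM - x)
    have h2 := hsym xM hcritM x
    rw [h2] at h1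
    rw [show 2 * L - (2 * xM - x) = x + 2 * ℓ by rw [hℓdef]; ring] at h1
    exact h1
  -- u' > 0 on (L, L + ℓ)
  have hpos : ∀ x ∈ Ioo L (L + ℓ), 0 < deriv u x := by
    intro x hx
    have h1 := hdsym L hL2 x
    have h2 : 2 * L - x ∈ Ioo xM L := by
      constructor
      · have hxx := hx.2; rw [hℓdef] at hxx; linarith
      · linarith [hx.1]
    have := hneg _ h2
    linarith [h1, this]
  -- u < a strictly inside the period
  have humax : ∀ x ∈ Ioo xM (xM + 2 * ℓ), u x < a := by
    intro x hx
    rcases le_or_gt x L with h | h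
    · exact hanti (left_mem_Icc.mpr (by linarith)) ⟨le_of_lt hx.1, h⟩ hx.1
    · have h1 := hsym L hL2 x
      have h2 : 2 * L - x ∈ Ioo xM L := by
        constructor
        · have hxx := hx.2; rw [hℓdef] at hxx; linarith
        · linarith
      have := hanti (left_mem_Icc.mpr (by linarith)) ⟨le_of_lt h2.1, le_of_lt h2.2⟩ h2.1
      rw [h1] at this
      exact this
  -- u > -a strictly except at L
  have humin : ∀ x ∈ Ico xM (xM + 2 * ℓ), x ≠ L → -a < u x := by
    intro x hx hxL
    rcases lt_trichotomy x L with h | h | h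
    · rcases eq_or_lt_of_le hx.1 with he | he
      · rw [← he]; linarith
      · have := hanti ⟨le_of_lt he, le_of_lt h⟩ (right_mem_Icc.mpr (by linarith)) h
        rw [huL] at this
        exact this
    · exact absurd h hxL
    · have h1 := hsym L hL2 x
      have h2 : 2 * L - x ∈ Ioo xM L := by
        constructor
        · have hxx := hx.2; rw [hℓdef] at hxx; linarith
        · linarith
      have := hanti ⟨le_of_lt h2.1, le_of_lt h2.2⟩ (right_mem_Icc.mpr (by linarith)) h2.2
      rw [huL, h1] at this
      exact this
  -- u is (2ℓ)-periodic as Function.Periodic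
  have hP2 : Function.Periodic u (2 * ℓ) := hper2
  -- 2π is a multiple of 2ℓ
  obtain ⟨k, hk1, hkval⟩ : ∃ k : ℕ, 1 ≤ k ∧ π = ℓ * k := by
    set q := ⌊2 * π / (2 * ℓ)⌋₊ with hq
    have h2ℓ : (0:ℝ) < 2 * ℓ := by linarith
    have hql : (q:ℝ) * (2 * ℓ) ≤ 2 * π := by
      have := Nat.floor_le (by positivity : (0:ℝ) ≤ 2 * π / (2 * ℓ))
      rw [← hq] at this
      calc (q:ℝ) * (2 * ℓ) ≤ (2 * π / (2 * ℓ)) * (2 * ℓ) := by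
            apply mul_le_mul_of_nonneg_right this (le_of_lt h2ℓ)
        _ = 2 * π := by field_simp
    have hqr : 2 * π < ((q:ℝ) + 1) * (2 * ℓ) := by
      have := Nat.lt_floor_add_one (2 * π / (2 * ℓ))
      rw [← hq] at this
      calc 2 * π = (2 * π / (2 * ℓ)) * (2 * ℓ) := by field_simp
        _ < ((q:ℝ) + 1) * (2 * ℓ) := by
            apply mul_lt_mul_of_pos_right _ h2ℓ
            exact_mod_cast this
    set r := 2 * π - (q:ℝ) * (2 * ℓ) with hr
    have hr0 : 0 ≤ r := by rw [hr]; linarith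
    have hr2 : r < 2 * ℓ := by rw [hr]; nlinarith
    have hur : u (xM + r) = a := by
      have h1 : u (xM + r + (q:ℝ) * (2 * ℓ)) = u (xM + r) := (hP2.nat_mul q) (xM + r)
      have h2 : xM + r + (q:ℝ) * (2 * ℓ) = xM + 2 * π := by rw [hr]; ring
      rw [h2] at h1
      rw [← h1, hper xM]
    rcases eq_or_lt_of_le hr0 with he | hlt
    · -- r = 0 : 2π = q * 2ℓ
      have hq2 : 2 * π = (q:ℝ) * (2 * ℓ) := by rw [hr] at he; linarith
      have hq1 : 1 ≤ q := by
        by_contra hq0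
        push_neg at hq0
        interval_cases q
        simp at hq2
      exact ⟨q, hq1, by nlinarith [hq2]⟩
    · exfalso
      have : xM + r ∈ Ioo xM (xM + 2 * ℓ) := ⟨by linarith, by linarith⟩
      have := humax _ this
      rw [hur] at this
      exact lt_irrefl _ this
  -- a zero point in (xM, L)
  obtain ⟨z₀, hz₀mem, hz₀⟩ : ∃ z₀ ∈ Ioo xM L, u z₀ = 0 := by
    have hc : ContinuousOn u (Icc xM L) := hreg.continuous.continuousOn
    have h0mem : (0:ℝ) ∈ Ioo (u L) (u xM) := by
      rw [huL, ← ha]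
      exact ⟨by linarith, ha0⟩
    obtain ⟨z, hz, hz0⟩ := intermediate_value_Ioo' (le_of_lt hLgt) hc h0mem
    exact ⟨z, hz, hz0⟩
  -- z₀ is the midpoint
  have hz₀mid : z₀ = xM + ℓ / 2 := by
    have h1 := hoddsym z₀ hz₀ xM
    rw [← ha] at h1
    have h2 : u (2 * z₀ - xM) = -a := h1
    have h3 : 2 * z₀ - xM ∈ Ico xM (xM + 2 * ℓ) := by
      constructor
      · linarith [hz₀mem.1]
      · have h5 := hz₀mem.2; have h6 : (xM:ℝ) + 2 * ℓ = 2 * L - xM := by rw [hℓdef]; ring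
        rw [h6]; linarith
    by_contra hne
    have h4 : 2 * z₀ - xM ≠ L := by
      intro h
      apply hne
      rw [hℓdef]
      linarith [h]
    have := humin _ h3 h4
    rw [h2] at this
    exact lt_irrefl _ this
  -- Sturm comparison: ℓ > π κ
  have hsturm : π * κ < ℓ := by
    by_contra hcon
    push_neg at hcon
    set α := z₀ - ℓ with hα
    have huα : u α = 0 := by
      have h1 : u (z₀ - ℓ + 2 * ℓ) = u (z₀ - ℓ) := hP2 (z₀ - ℓ)
      have h2 : z₀ - ℓ + 2 * ℓ = z₀ + ℓ := by ring
      rw [h2] at h1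
      have h3 := hsym L hL2 (z₀ + ℓ)
      have h4 : 2 * L - (z₀ + ℓ) = z₀ := by rw [hz₀mid, hℓdef]; ring
      rw [h4] at h3
      rw [hα, ← h1, ← h3, hz₀]
    have hupos : ∀ x ∈ Ioo α z₀, 0 < u x := by
      intro x hx
      rcases lt_trichotomy x xM with h | h | h
      · have h1 := hsym xM hcritM x
        have h2 : 2 * xM - x ∈ Ioo xM z₀ := by
          constructor
          · linarith
          · rw [hz₀mid]; have := hx.1; rw [hα, hz₀mid] at this; linarith
        have h3 : u (2 * xM - x) > u z₀ := by
          apply hanti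
          · constructor
            · linarith [h2.1]
            · rw [hz₀mid] at h2; rw [hℓdef] at *; linarith [h2.2]
          · exact ⟨le_of_lt hz₀mem.1, le_of_lt hz₀mem.2⟩
          · exact h2.2
        rw [h1, hz₀] at h3
        exact h3
      · rw [h, ← ha]; exact ha0
      · have h3 : u x > u z₀ := by
          apply hanti
          · exact ⟨le_of_lt h, le_trans (le_of_lt hx.2) (le_of_lt hz₀mem.2)⟩
          · exact ⟨le_of_lt hz₀mem.1, le_of_lt hz₀mem.2⟩
          · exact hx.2
        rw [hz₀] at h3
        exact h3
    have huz' : deriv u z₀ < 0 := hneg z₀ hz₀mem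
    -- the comparison function W
    set s : ℝ → ℝ := fun x => Real.sin ((x - α) / κ) with hs
    set W : ℝ → ℝ := fun x => deriv u x * s x - u x * (Real.cos ((x - α) / κ) / κ) with hW
    have hWder : ∀ x, HasDerivAt W (s x * (u x) ^ 3 / κ ^ 2) x := by
      intro x
      have hI : HasDerivAt (fun x : ℝ => (x - α) / κ) (1 / κ) x := by
        simpa using ((hasDerivAt_id x).sub_const α).div_const κ
      have Hs : HasDerivAt s (Real.cos ((x - α) / κ) * (1 / κ)) x := by
        have := (Real.hasDerivAt_sin ((x - α) / κ)).comp x hI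
        exact this
      have Hc : HasDerivAt (fun x => Real.cos ((x - α) / κ) / κ)
          (-Real.sin ((x - α) / κ) * (1 / κ) / κ) x := by
        have := ((Real.hasDerivAt_cos ((x - α) / κ)).comp x hI).div_const κ
        simpa [Function.comp] using this
      have Hu : HasDerivAt u (deriv u x) x := (hud x).hasDerivAt
      have Hu' : HasDerivAt (deriv u) (deriv (deriv u) x) x := (hud' x).hasDerivAt
      have H1 : HasDerivAt (fun x => deriv u x * s x)
          (deriv (deriv u) x * s x + deriv u x * (Real.cos ((x - α) / κ) * (1 / κ))) x :=
        Hu'.mul Hs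
      have H2 : HasDerivAt (fun x => u x * (Real.cos ((x - α) / κ) / κ))
          (deriv u x * (Real.cos ((x - α) / κ) / κ) +
            u x * (-Real.sin ((x - α) / κ) * (1 / κ) / κ)) x :=
        Hu.mul Hc
      have Htot := H1.sub H2
      have hval : deriv (deriv u) x * s x + deriv u x * (Real.cos ((x - α) / κ) * (1 / κ)) -
          (deriv u x * (Real.cos ((x - α) / κ) / κ) +
            u x * (-Real.sin ((x - α) / κ) * (1 / κ) / κ)) = s x * (u x) ^ 3 / κ ^ 2 := by
        have hs' : s x = Real.sin ((x - α) / κ) := rfl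
        have hκ0 : κ ≠ 0 := ne_of_gt hκ
        have hdd : deriv (deriv u) x = ((u x) ^ 3 - u x) / κ ^ 2 := by
          have := heq x
          field_simp
          linarith
        rw [hdd, hs']
        field_simp
        ring
      rw [hval] at Htot
      exact Htot
    have hWα : W α = 0 := by
      rw [hW]
      simp only []
      rw [hs]
      simp only []
      rw [huα, show (α - α) / κ = 0 by ring]
      simp
    have hmono : StrictMonoOn W (Icc α z₀) := by
      apply strictMonoOn_of_deriv_pos (convex_Icc _ _)
      · exact fun x _ => (hWder x).continuousAt.continuousWithinAt
      · intro x hx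
        rw [interior_Icc] at hx
        rw [(hWder x).deriv]
        have hsx : 0 < s x := by
          rw [hs]
          apply Real.sin_pos_of_pos_of_lt_pi
          · have := hx.1; rw [hα] at this
            apply div_pos (by linarith) hκ
          · have h1 : x - α < ℓ := by rw [hα]; linarith [hx.2]
            have h2 : (x - α) / κ < ℓ / κ := by gcongr
            have h3 : ℓ / κ ≤ π := by rw [div_le_iff₀ hκ]; linarith
            linarith
        have hux := hupos x hx
        exact div_pos (mul_pos hsx (pow_pos hux 3)) hκ2
    -- endpoint contradiction
    have hαz : α < z₀ := by rw [hα]; linarith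
    have hfin := hmono (left_mem_Icc.mpr (le_of_lt hαz)) (right_mem_Icc.mpr (le_of_lt hαz)) hαz
    rw [hWα] at hfin
    have hWz : W z₀ = deriv u z₀ * Real.sin (ℓ / κ) := by
      rw [hW]
      simp only []
      rw [hz₀, hs]
      simp only []
      rw [show (z₀ - α) / κ = ℓ / κ by rw [hα]; ring]
      ring
    have hsin : 0 ≤ Real.sin (ℓ / κ) := by
      apply Real.sin_nonneg_of_nonneg_of_le_pi
      · positivity
      · rw [div_le_iff₀ hκ]; linarith
    have hprod : deriv u z₀ * Real.sin (ℓ / κ) ≤ 0 :=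
      mul_nonpos_iff.mpr (Or.inr ⟨le_of_lt huz', hsin⟩)
    rw [hWz] at hfin
    linarith
  -- k bounds
  have hk0 : (0:ℝ) < (k:ℝ) := by exact_mod_cast hk1
  have hk0' : ((k:ℝ)) ≠ 0 := ne_of_gt hk0
  have hkκ : (k:ℝ) * κ < 1 := by nlinarith [hsturm, hk0, hkval, hπ]
  have hkm : k ≤ m := by
    have hm1 : (0:ℝ) < (m:ℝ) + 1 := by positivity
    have h4 : 1 ≤ κ * ((m:ℝ) + 1) := by
      rw [div_le_iff₀ hm1] at hml
      linarith
    have h2 : (k:ℝ) < (m:ℝ) + 1 := by nlinarith [hkκ, hκ, hk0]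
    have h3 : k < m + 1 := by exact_mod_cast h2
    omega
  -- assemble the ground state
  set c : ℝ := -(k:ℝ) * z₀ with hc
  set W : ℝ → ℝ := fun y : ℝ => (-1:ℝ) * u ((y - c) / (k:ℝ)) with hWdef
  have harg : ∀ y : ℝ, (y - c) / (k:ℝ) = y / (k:ℝ) + z₀ := by
    intro y; rw [hc]; field_simp; ring
  have hI : ∀ y : ℝ, HasDerivAt (fun y : ℝ => (y - c) / (k:ℝ)) (1 / (k:ℝ)) y := fun y => by
    simpa using ((hasDerivAt_id y).sub_const c).div_const (k:ℝ)
  have hWd : ∀ y, HasDerivAt W (-1 * (deriv u ((y - c) / (k:ℝ)) * (1 / (k:ℝ)))) y := by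
    intro y
    exact ((hud _).hasDerivAt.comp y (hI y)).const_mul (-1:ℝ)
  have hWd' : deriv W = fun y => -1 * (deriv u ((y - c) / (k:ℝ)) * (1 / (k:ℝ))) :=
    funext fun y => (hWd y).deriv
  have hWdd : ∀ y, deriv (deriv W) y =
      -1 * (deriv (deriv u) ((y - c) / (k:ℝ)) * (1 / (k:ℝ)) * (1 / (k:ℝ))) := by
    intro y
    rw [hWd']
    have h1 := (((hud' _).hasDerivAt.comp y (hI y)).mul_const (1 / (k:ℝ))).const_mul (-1:ℝ)
    have h2 : HasDerivAt (fun y => -1 * (deriv u ((y - c) / (k:ℝ)) * (1 / (k:ℝ))))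
        (-1 * (deriv (deriv u) ((y - c) / (k:ℝ)) * (1 / (k:ℝ)) * (1 / (k:ℝ)))) y := h1
    exact h2.deriv
  have hWreg : ContDiff ℝ 2 W := by
    rw [hWdef]
    exact contDiff_const.mul (hreg.comp ((contDiff_id.sub contDiff_const).div_const _))
  have hWper : Function.Periodic W (2 * π) := by
    intro y
    rw [hWdef]
    simp only []
    have h1 : (y + 2 * π - c) / (k:ℝ) = (y - c) / (k:ℝ) + 2 * ℓ := by
      field_simp
      linear_combination 2 * hkval
    rw [h1, hper2]
  have hWodd : ∀ y, W (-y) = -W y := by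
    intro y
    rw [hWdef]
    simp only []
    have h1 : (-y - c) / (k:ℝ) = 2 * z₀ - ((y - c) / (k:ℝ)) := by
      rw [hc]; field_simp; ring
    rw [h1, hoddsym z₀ hz₀]
    ring
  have hWode : ∀ y, ((k:ℝ) * κ) ^ 2 * deriv (deriv W) y + W y - (W y) ^ 3 = 0 := by
    intro y
    rw [hWdd y, hWdef]
    simp only []
    have hkk : ((k:ℝ)) ^ 2 * ((1 / (k:ℝ)) * (1 / (k:ℝ))) = 1 := by
      field_simp
    have hheq := heq ((y - c) / (k:ℝ))
    linear_combination (-1) * hheq - κ ^ 2 * deriv (deriv u) ((y - c) / (k:ℝ)) * hkk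
  have hWpos : ∀ y ∈ Ico (0:ℝ) (π / 2), 0 < deriv W y := by
    intro y hy
    rw [hWd']
    simp only []
    have hsmem : (y - c) / (k:ℝ) ∈ Ioo xM L := by
      rw [harg y]
      constructor
      · have h0 : 0 ≤ y / (k:ℝ) := div_nonneg hy.1 (le_of_lt hk0)
        linarith [hz₀mem.1]
      · have h1 : y / (k:ℝ) < (π / 2) / (k:ℝ) := by gcongr; exact hy.2
        have h2 : (π / 2) / (k:ℝ) = ℓ / 2 := by rw [hkval]; field_simp
        rw [hz₀mid]
        rw [h2] at h1
        rw [hℓdef] at h1 ⊢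
        linarith
    have h3 : deriv u ((y - c) / (k:ℝ)) < 0 := hneg _ hsmem
    have h4 := mul_pos (show 0 < -deriv u ((y - c) / (k:ℝ)) by linarith)
      (show 0 < 1 / (k:ℝ) by positivity)
    nlinarith [h4]
  have hWneg : ∀ y ∈ Ioc (π / 2) π, deriv W y < 0 := by
    intro y hy
    rw [hWd']
    simp only []
    have hsmem : (y - c) / (k:ℝ) ∈ Ioo L (L + ℓ) := by
      rw [harg y]
      constructor
      · have h1 : (π / 2) / (k:ℝ) < y / (k:ℝ) := by gcongr; exact hy.1
        have h2 : (π / 2) / (k:ℝ) = ℓ / 2 := by rw [hkval]; field_simp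
        rw [hz₀mid]
        rw [h2] at h1
        rw [hℓdef] at h1 ⊢
        linarith
      · have h1 : y / (k:ℝ) ≤ π / (k:ℝ) := by gcongr; exact hy.2
        have h2 : π / (k:ℝ) = ℓ := by rw [hkval]; field_simp
        rw [hz₀mid]
        rw [h2] at h1
        rw [hℓdef] at h1 ⊢
        linarith [hℓ0]
    have h3 : 0 < deriv u ((y - c) / (k:ℝ)) := hpos _ hsmem
    have h4 := mul_pos h3 (show 0 < 1 / (k:ℝ) by positivity)
    nlinarith [h4]
  exact ⟨k, hk1, hkm, c, -1, Or.inr rfl, hWreg, hWper, hWodd, hWode, hWpos, hWneg⟩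

end SteadyAux

/-- classification of bounded periodic steady states for `κ ∈ (0,1)`:
exactly one of (1) `u ≡ ±1` or `u ≡ 0`, or (2) a rescaled/translated/reflected copy of
an odd zero-up ground state with parameter `jκ` for some `1 ≤ j ≤ m_κ`. -/
theorem steady_state_classification (κ : ℝ) (hκ : 0 < κ) (hκ1 : κ < 1)
    (m : ℕ) (hm : 1 ≤ m) (hml : 1 / ((m : ℝ) + 1) ≤ κ) (hmr : κ < 1 / (m : ℝ))
    (u : ℝ → ℝ) (hreg : ContDiff ℝ 2 u) (hbdd : ∃ C : ℝ, ∀ x : ℝ, |u x| ≤ C)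
    (hper : Function.Periodic u (2 * π))
    (heq : ∀ x : ℝ, κ ^ 2 * deriv (deriv u) x + u x - u x ^ 3 = 0) :
    Xor' ((∀ x : ℝ, u x = 1) ∨ (∀ x : ℝ, u x = -1) ∨ (∀ x : ℝ, u x = 0))
      (∃ j : ℕ, 1 ≤ j ∧ j ≤ m ∧ ∃ c : ℝ, ∃ σ : ℝ, (σ = 1 ∨ σ = -1) ∧
        IsOddZeroUpGroundState ((j : ℝ) * κ) (fun y : ℝ => σ * u ((y - c) / (j : ℝ)))) := by
  obtain ⟨C, hbC⟩ := hbdd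
  by_cases hallcrit : ∀ x, deriv u x = 0
  · -- constant case
    left
    have hconst : ∀ x, u x = u 0 := fun x =>
      is_const_of_deriv_eq_zero (reg2 hreg).1 hallcrit x 0
    constructor
    · -- u is one of the constants
      have h2 : deriv (deriv u) 0 = 0 := by
        rw [show deriv u = fun _ => (0:ℝ) from funext hallcrit]
        simp
      have h1 := heq 0
      rw [h2] at h1
      have hcube : u 0 * (1 - u 0) * (1 + u 0) = 0 := by nlinarith [h1]
      rcases mul_eq_zero.mp hcube with h | h
      · rcases mul_eq_zero.mp h with h | h
        · right; right; exact fun x => by rw [hconst x]; exact h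
        · left; exact fun x => by rw [hconst x]; linarith
      · right; left; exact fun x => by rw [hconst x]; linarith
    · -- no rescaled ground state exists
      rintro ⟨j, hj1, hjm, c, σ, hσ, hGS⟩
      have hW0 : (0:ℝ) ∈ Set.Ico (0:ℝ) (π / 2) := ⟨le_refl _, by positivity⟩
      have hpos := hGS.2.2.2.2.1 0 hW0
      have hWconst : (fun y : ℝ => σ * u ((y - c) / (j:ℝ))) = fun _ => σ * u 0 := by
        funext y
        rw [hconst ((y - c) / (j:ℝ))]
      rw [hWconst] at hpos
      simp at hpos
  · -- nonconstant case
    right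
    push_neg at hallcrit
    constructor
    · exact nonconst_case κ hκ m hml u hreg C hbC hper heq hallcrit
    · rintro (hA | hA | hA) <;>
        (obtain ⟨x₁, hx₁⟩ := hallcrit
         apply hx₁
         rw [show u = fun _ => _ from funext hA]
         simp)
end
end
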